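/- arXiv:1706.07832 — 11 statements merged into one kernel-verified Lean document; each statement's English description precedes it below -/
import Mathlib

section
/- Let n ≥ 2 and let ρ be a real-valued function on n×n real symmetric positive semidefinite matrices that is convex (ρ(αL₁+(1−α)L₂) ≤ αρ(L₁)+(1−α)ρ(L₂) for all 0 ≤ α ≤ 1) and orthogonally invariant (ρ(U L Uᵀ) = ρ(L) for every orthogonal matrix U). Then ρ is a Schur-convex function of the eigenvalues: for any two real symmetric positive semidefinite n×n matrices L₁ and L₂ whose eigenvalue vectors (listed in decreasing order) satisfy that the eigenvalue vector of L₁ majorizes the eigenvalue vector of L₂, one has ρ(L₂) ≤ ρ(L₁). -/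
open Filter Finset Matrix

/-- The eigenvalues of a real matrix, listed in increasing order (counted with multiplicity);
junk value `0` if the matrix is not symmetric. -/
noncomputable def sortedEigenvalues {n : ℕ} (A : Matrix (Fin n) (Fin n) ℝ) : Fin n → ℝ :=
  if hA : A.IsHermitian then hA.eigenvalues ∘ Tuple.sort hA.eigenvalues else fun _ => 0

/-- Eigenvalues of `A` listed in decreasing order. -/
noncomputable def decEigenvalues {n : ℕ} (A : Matrix (Fin n) (Fin n) ℝ) : Fin n → ℝ :=
  fun i => sortedEigenvalues A i.rev

/-- `x` majorizes `y`, for vectors already listed in decreasing order. -/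
def MajorizesDec {n : ℕ} (x y : Fin n → ℝ) : Prop :=
  (∑ i, x i = ∑ i, y i) ∧
    ∀ k : ℕ, k ≤ n →
      ∑ i ∈ Finset.univ.filter (fun i : Fin n => (i : ℕ) < k), y i ≤
        ∑ i ∈ Finset.univ.filter (fun i : Fin n => (i : ℕ) < k), x i

lemma permMatrix_orth {n : ℕ} (σ : Equiv.Perm (Fin n)) :
    (σ.toPEquiv.toMatrix : Matrix (Fin n) (Fin n) ℝ) * (σ.toPEquiv.toMatrix)ᵀ = 1 ∧
      ((σ.toPEquiv.toMatrix : Matrix (Fin n) (Fin n) ℝ))ᵀ * σ.toPEquiv.toMatrix = 1 := by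
  constructor
  · rw [← PEquiv.toMatrix_symm, ← PEquiv.toMatrix_trans, ← Equiv.toPEquiv_symm,
      ← Equiv.toPEquiv_trans]
    simp
  · rw [← PEquiv.toMatrix_symm, ← PEquiv.toMatrix_trans, ← Equiv.toPEquiv_symm,
      ← Equiv.toPEquiv_trans]
    simp

lemma permMatrix_conj {n : ℕ} (σ : Equiv.Perm (Fin n)) (v : Fin n → ℝ) :
    (σ.toPEquiv.toMatrix : Matrix (Fin n) (Fin n) ℝ) * diagonal v * (σ.toPEquiv.toMatrix)ᵀ
      = diagonal (v ∘ σ) := by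
  rw [← PEquiv.toMatrix_symm, ← Equiv.toPEquiv_symm, mul_assoc,
    PEquiv.mul_toMatrix_toPEquiv, PEquiv.toMatrix_toPEquiv_mul]
  simp [Matrix.submatrix_diagonal_equiv]

lemma decEigenvalues_eq_comp {n : ℕ} (A : Matrix (Fin n) (Fin n) ℝ) (hA : A.IsHermitian) :
    decEigenvalues A = hA.eigenvalues ∘ ⇑((Fin.revPerm).trans (Tuple.sort hA.eigenvalues)) := by
  funext i
  simp only [decEigenvalues, sortedEigenvalues, dif_pos hA]
  rfl

lemma decEigenvalues_antitone {n : ℕ} (A : Matrix (Fin n) (Fin n) ℝ) (hA : A.IsHermitian) :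
    Antitone (decEigenvalues A) := by
  intro i j hij
  simp only [decEigenvalues, sortedEigenvalues, dif_pos hA]
  exact Tuple.monotone_sort hA.eigenvalues (Fin.rev_le_rev.mpr hij)

lemma decEigenvalues_nonneg {n : ℕ} (A : Matrix (Fin n) (Fin n) ℝ) (hA : A.PosSemidef) (i : Fin n) :
    0 ≤ decEigenvalues A i := by
  simp only [decEigenvalues, sortedEigenvalues, dif_pos hA.1, Function.comp_apply]
  exact hA.eigenvalues_nonneg _

lemma rho_diag {n : ℕ}
    (ρ : Matrix (Fin n) (Fin n) ℝ → ℝ)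
    (hinv : ∀ L : Matrix (Fin n) (Fin n) ℝ, L.PosSemidef →
      ∀ U : Matrix (Fin n) (Fin n) ℝ, U * Uᵀ = 1 → Uᵀ * U = 1 →
        ρ (U * L * Uᵀ) = ρ L)
    (L : Matrix (Fin n) (Fin n) ℝ) (hL : L.PosSemidef) :
    ρ L = ρ (diagonal (decEigenvalues L)) := by
  have hA := hL.isHermitian
  set U : Matrix (Fin n) (Fin n) ℝ := (hA.eigenvectorUnitary : Matrix (Fin n) (Fin n) ℝ)
    with hU
  have hU1 : U * Uᵀ = 1 := by
    rw [← conjTranspose_eq_transpose_of_trivial]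
    exact (Matrix.mem_unitaryGroup_iff).mp hA.eigenvectorUnitary.2
  have hU2 : Uᵀ * U = 1 := by
    rw [← conjTranspose_eq_transpose_of_trivial]
    exact (Matrix.mem_unitaryGroup_iff').mp hA.eigenvectorUnitary.2
  have hDpsd : (diagonal hA.eigenvalues).PosSemidef :=
    Matrix.posSemidef_diagonal_iff.mpr fun i => hL.eigenvalues_nonneg i
  have hspec : L = U * diagonal hA.eigenvalues * Uᵀ := by
    have h := hA.spectral_theorem
    rwa [Unitary.conjStarAlgAut_apply, RCLike.ofReal_real_eq_id, Function.id_comp, Matrix.star_eq_conjTranspose,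
      conjTranspose_eq_transpose_of_trivial] at h
  set σ : Equiv.Perm (Fin n) := (Fin.revPerm).trans (Tuple.sort hA.eigenvalues) with hσ
  have h1 : ρ L = ρ (diagonal hA.eigenvalues) := by
    conv_lhs => rw [hspec]
    exact hinv _ hDpsd U hU1 hU2
  have h2 : ρ (diagonal (hA.eigenvalues ∘ ⇑σ)) = ρ (diagonal hA.eigenvalues) := by
    rw [← permMatrix_conj σ hA.eigenvalues]
    exact hinv _ hDpsd _ (permMatrix_orth σ).1 (permMatrix_orth σ).2
  rw [h1, decEigenvalues_eq_comp L hA, h2]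

lemma core_schur {n : ℕ} (f : (Fin n → ℝ) → ℝ)
    (hperm : ∀ v : Fin n → ℝ, (∀ i, 0 ≤ v i) → ∀ σ : Equiv.Perm (Fin n), f (v ∘ σ) = f v)
    (hcvx : ∀ u v : Fin n → ℝ, (∀ i, 0 ≤ u i) → (∀ i, 0 ≤ v i) → ∀ t : ℝ, 0 ≤ t → t ≤ 1 →
      f (t • u + (1 - t) • v) ≤ t * f u + (1 - t) * f v) :
    ∀ d : ℕ, ∀ x y : Fin n → ℝ,
      (Finset.univ.filter fun i => x i ≠ y i).card ≤ d →
      (∀ i, 0 ≤ x i) → (∀ i, 0 ≤ y i) → Antitone y → MajorizesDec x y → f y ≤ f x := by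
  intro d
  induction d with
  | zero =>
    intro x y hcard _ _ _ _
    have hxy : x = y := by
      funext i
      by_contra hne
      have : i ∈ Finset.univ.filter fun i => x i ≠ y i := by simp [hne]
      have := Finset.card_pos.mpr ⟨i, this⟩
      omega
    rw [hxy]
  | succ d ih =>
    intro x y hcard hx hy hyanti hmaj
    by_cases hxy : x = y
    · rw [hxy]
    -- the set of disagreement
    set S : Finset (Fin n) := Finset.univ.filter (fun i => x i ≠ y i) with hS
    have hSne : S.Nonempty := by
      obtain ⟨i, hi⟩ := Function.ne_iff.mp hxy
      exact ⟨i, by simp [hS, hi]⟩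
    set j := S.min' hSne with hjdef
    have hjS : j ∈ S := S.min'_mem hSne
    have hjmin : ∀ i : Fin n, i < j → x i = y i := by
      intro i hi
      by_contra hne
      exact absurd (S.min'_le i (by simp [hS, hne])) (not_le.mpr hi)
    -- x j > y j
    have hsplit : ∀ m : Fin n,
        Finset.univ.filter (fun i : Fin n => (i : ℕ) < (m : ℕ) + 1) =
          insert m (Finset.univ.filter (fun i : Fin n => (i : ℕ) < (m : ℕ))) := by
      intro m
      ext i
      simp only [Finset.mem_filter, Finset.mem_univ, true_and, Finset.mem_insert]
      constructor
      · intro h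
        rcases Nat.lt_succ_iff_lt_or_eq.mp h with h | h
        · exact Or.inr h
        · exact Or.inl (Fin.ext h)
      · rintro (rfl | h)
        · omega
        · omega
    have hprefix_eq : ∀ m : Fin n, (∀ i : Fin n, i < m → x i = y i) →
        ∑ i ∈ Finset.univ.filter (fun i : Fin n => (i : ℕ) < (m : ℕ)), x i =
        ∑ i ∈ Finset.univ.filter (fun i : Fin n => (i : ℕ) < (m : ℕ)), y i := by
      intro m hm
      apply Finset.sum_congr rfl
      intro i hi
      simp only [Finset.mem_filter] at hi
      exact hm i (by exact Fin.lt_def.mpr hi.2)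
    have hxj : y j < x j := by
      have h1 := hmaj.2 ((j : ℕ) + 1) (by omega)
      rw [hsplit j, Finset.sum_insert (by simp), Finset.sum_insert (by simp)] at h1
      have h2 := hprefix_eq j hjmin
      have hne : x j ≠ y j := by simpa [hS] using hjS
      have : y j ≤ x j := by linarith
      exact lt_of_le_of_ne this (Ne.symm hne)
    -- the set where x < y
    set T : Finset (Fin n) := Finset.univ.filter (fun i => x i < y i) with hT
    have hTne : T.Nonempty := by
      by_contra hTe
      rw [Finset.not_nonempty_iff_eq_empty] at hTe
      have hle : ∀ i : Fin n, y i ≤ x i := by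
        intro i
        by_contra h
        have : i ∈ T := by simp [hT]; linarith
        simp [hTe] at this
      have : ∑ i, y i < ∑ i, x i :=
        Finset.sum_lt_sum (fun i _ => hle i) ⟨j, Finset.mem_univ j, hxj⟩
      linarith [hmaj.1]
    set k := T.min' hTne with hkdef
    have hkT : k ∈ T := T.min'_mem hTne
    have hxk : x k < y k := by simpa [hT] using hkT
    have hkmin : ∀ i : Fin n, i < k → y i ≤ x i := by
      intro i hi
      by_contra hne
      exact absurd (T.min'_le i (by simp [hT]; linarith)) (not_le.mpr hi)
    have hjk : j < k := by
      rcases lt_trichotomy j k with h | h | h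
      · exact h
      · exfalso; rw [h] at hxj; linarith
      · exfalso; have := hjmin k h; linarith
    have hjky : y k ≤ y j := hyanti hjk.le
    set δ : ℝ := min (x j - y j) (y k - x k) with hδdef
    have hδpos : 0 < δ := lt_min (by linarith) (by linarith)
    have hδ1 : δ ≤ x j - y j := min_le_left _ _
    have hδ2 : δ ≤ y k - x k := min_le_right _ _
    have hgap : δ + δ ≤ x j - x k := by linarith
    have hgpos : (0:ℝ) < x j - x k := by linarith
    have hgne : x j - x k ≠ 0 := ne_of_gt hgpos
    set t : ℝ := 1 - δ / (x j - x k) with htdef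
    have ht0 : 0 ≤ t := by
      have : δ / (x j - x k) ≤ 1 := (div_le_one hgpos).mpr (by linarith)
      rw [htdef]; linarith
    have ht1 : t ≤ 1 := by
      have : 0 ≤ δ / (x j - x k) := div_nonneg hδpos.le hgpos.le
      rw [htdef]; linarith
    have hjkne : j ≠ k := hjk.ne
    set x' : Fin n → ℝ := fun i => if i = j then x j - δ else if i = k then x k + δ else x i
      with hx'def
    have hx'j : x' j = x j - δ := by simp [hx'def]
    have hx'k : x' k = x k + δ := by simp [hx'def, hjkne.symm]
    have hx'other : ∀ i, i ≠ j → i ≠ k → x' i = x i := by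
      intro i h1 h2; simp [hx'def, h1, h2]
    -- convex combination
    have hcomb : x' = t • x + (1 - t) • (x ∘ (Equiv.swap j k)) := by
      funext i
      simp only [Pi.add_apply, Pi.smul_apply, smul_eq_mul, Function.comp_apply]
      by_cases h1 : i = j
      · subst h1
        rw [Equiv.swap_apply_left, hx'j, htdef]
        field_simp
        ring
      by_cases h2 : i = k
      · subst h2
        rw [Equiv.swap_apply_right, hx'k, htdef]
        field_simp
        ring
      · rw [Equiv.swap_apply_of_ne_of_ne h1 h2, hx'other i h1 h2]
        ring
    have hx' : ∀ i, 0 ≤ x' i := by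
      intro i
      by_cases h1 : i = j
      · subst h1; rw [hx'j]; linarith [hy j]
      by_cases h2 : i = k
      · subst h2; rw [hx'k]; linarith [hx k]
      · rw [hx'other i h1 h2]; exact hx i
    -- f x' ≤ f x
    have hfx' : f x' ≤ f x := by
      rw [hcomb]
      calc f (t • x + (1 - t) • (x ∘ (Equiv.swap j k)))
          ≤ t * f x + (1 - t) * f (x ∘ (Equiv.swap j k)) :=
            hcvx x _ hx (fun i => hx _) t ht0 ht1
        _ = f x := by rw [hperm x hx (Equiv.swap j k)]; ring
    -- sums of x' over finsets
    have hsum : ∀ A : Finset (Fin n),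
        ∑ i ∈ A, x' i = ∑ i ∈ A, x i
          + (if k ∈ A then δ else 0) - (if j ∈ A then δ else 0) := by
      intro A
      have : ∀ i ∈ A, x' i = x i + ((if i = k then δ else 0) - (if i = j then δ else 0)) := by
        intro i _
        by_cases h1 : i = j
        · subst h1; simp [hx'j, hjkne]; ring
        by_cases h2 : i = k
        · subst h2; simp [hx'k, hjkne.symm, h1]
        · simp [hx'other i h1 h2, h1, h2]
      rw [Finset.sum_congr rfl this, Finset.sum_add_distrib, Finset.sum_sub_distrib,
        Finset.sum_ite_eq' A k (fun _ => δ), Finset.sum_ite_eq' A j (fun _ => δ)]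
      ring
    -- majorization x' ⊵ y
    have hmaj' : MajorizesDec x' y := by
      constructor
      · have := hsum Finset.univ
        simp only [Finset.mem_univ, if_true] at this
        rw [this, hmaj.1]; ring
      · intro m hm
        set A : Finset (Fin n) := Finset.univ.filter (fun i : Fin n => (i : ℕ) < m) with hA
        have hmemA : ∀ i : Fin n, i ∈ A ↔ (i : ℕ) < m := by intro i; simp [hA]
        rw [hsum A]
        by_cases hjm : (j : ℕ) < m
        · by_cases hkm : (k : ℕ) < m
          · rw [if_pos ((hmemA k).mpr hkm), if_pos ((hmemA j).mpr hjm)]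
            have := hmaj.2 m hm
            linarith
          · rw [if_neg (fun h => hkm ((hmemA k).mp h)), if_pos ((hmemA j).mpr hjm)]
            -- need:  ∑ y ≤ ∑ x - δ  on A
            have hjA : j ∈ A := (hmemA j).mpr hjm
            have hsplitA : ∑ i ∈ A, (x i - y i) = (x j - y j) + ∑ i ∈ A.erase j, (x i - y i) :=
              (Finset.add_sum_erase A _ hjA).symm
            have hterm : ∀ i ∈ A.erase j, 0 ≤ x i - y i := by
              intro i hi
              rw [Finset.mem_erase] at hi
              have him : (i : ℕ) < m := (hmemA i).mp hi.2
              have hik : i < k := by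
                rw [Fin.lt_def]
                omega
              linarith [hkmin i hik]
            have h0 : 0 ≤ ∑ i ∈ A.erase j, (x i - y i) := Finset.sum_nonneg hterm
            have : δ ≤ ∑ i ∈ A, (x i - y i) := by
              rw [hsplitA]; linarith
            rw [Finset.sum_sub_distrib] at this
            linarith
        · have hkm : ¬ (k : ℕ) < m := by
            have := Fin.lt_def.mp hjk
            omega
          rw [if_neg (fun h => hkm ((hmemA k).mp h)), if_neg (fun h => hjm ((hmemA j).mp h))]
          have := hmaj.2 m hm
          linarith
    -- card decrease
    have hsub : Finset.univ.filter (fun i => x' i ≠ y i) ⊆ S := by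
      intro i hi
      simp only [Finset.mem_filter, Finset.mem_univ, true_and] at hi ⊢
      rw [hS, Finset.mem_filter]
      refine ⟨Finset.mem_univ i, ?_⟩
      by_cases h1 : i = j
      · subst h1; exact fun h => by rw [h] at hxj; linarith
      by_cases h2 : i = k
      · subst h2; exact fun h => by rw [h] at hxk; linarith
      · rwa [hx'other i h1 h2] at hi
    have hcard' : (Finset.univ.filter fun i => x' i ≠ y i).card ≤ d := by
      rcases min_cases (x j - y j) (y k - x k) with ⟨hmin, _⟩ | ⟨hmin, _⟩
      · -- δ = x j - y j, so x' j = y j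
        have hj' : x' j = y j := by rw [hx'j, hδdef, hmin]; ring
        have : Finset.univ.filter (fun i => x' i ≠ y i) ⊆ S.erase j := by
          intro i hi
          rw [Finset.mem_erase]
          refine ⟨?_, hsub hi⟩
          rintro rfl
          simp only [Finset.mem_filter, Finset.mem_univ, true_and] at hi
          exact hi hj'
        calc (Finset.univ.filter fun i => x' i ≠ y i).card ≤ (S.erase j).card :=
              Finset.card_le_card this
          _ = S.card - 1 := Finset.card_erase_of_mem hjS
          _ ≤ d := by omega
      · -- δ = y k - x k, so x' k = y k
        have hk' : x' k = y k := by rw [hx'k, hδdef, hmin]; ring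
        have hkS : k ∈ S := by
          rw [hS, Finset.mem_filter]
          exact ⟨Finset.mem_univ k, by intro h; rw [h] at hxk; linarith⟩
        have : Finset.univ.filter (fun i => x' i ≠ y i) ⊆ S.erase k := by
          intro i hi
          rw [Finset.mem_erase]
          refine ⟨?_, hsub hi⟩
          rintro rfl
          simp only [Finset.mem_filter, Finset.mem_univ, true_and] at hi
          exact hi hk'
        calc (Finset.univ.filter fun i => x' i ≠ y i).card ≤ (S.erase k).card :=
              Finset.card_le_card this
          _ = S.card - 1 := Finset.card_erase_of_mem hkS
          _ ≤ d := by omega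
    exact le_trans (ih x' y hcard' hx' hy hyanti hmaj') hfx'

/-- Every convex, orthogonally invariant function on positive semidefinite matrices is
Schur-convex in the eigenvalues. -/
theorem schur_convexity_of_convex_orthInvariant {n : ℕ} (hn : 2 ≤ n)
    (ρ : Matrix (Fin n) (Fin n) ℝ → ℝ)
    (hconv : ∀ L₁ L₂ : Matrix (Fin n) (Fin n) ℝ, L₁.PosSemidef → L₂.PosSemidef →
      ∀ α : ℝ, 0 ≤ α → α ≤ 1 →
        ρ (α • L₁ + (1 - α) • L₂) ≤ α * ρ L₁ + (1 - α) * ρ L₂)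
    (hinv : ∀ L : Matrix (Fin n) (Fin n) ℝ, L.PosSemidef →
      ∀ U : Matrix (Fin n) (Fin n) ℝ, U * Uᵀ = 1 → Uᵀ * U = 1 →
        ρ (U * L * Uᵀ) = ρ L)
    (L₁ L₂ : Matrix (Fin n) (Fin n) ℝ) (h₁ : L₁.PosSemidef) (h₂ : L₂.PosSemidef)
    (hmaj : MajorizesDec (decEigenvalues L₁) (decEigenvalues L₂)) :
    ρ L₂ ≤ ρ L₁ := by
  classical
  have hdiag : ∀ v : Fin n → ℝ, (∀ i, 0 ≤ v i) → (Matrix.diagonal v).PosSemidef :=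
    fun v hv => Matrix.posSemidef_diagonal_iff.mpr hv
  have hperm : ∀ v : Fin n → ℝ, (∀ i, 0 ≤ v i) → ∀ σ : Equiv.Perm (Fin n),
      ρ (Matrix.diagonal (v ∘ σ)) = ρ (Matrix.diagonal v) := by
    intro v hv σ
    rw [← permMatrix_conj σ v]
    exact hinv _ (hdiag v hv) _ (permMatrix_orth σ).1 (permMatrix_orth σ).2
  have hcvx : ∀ u v : Fin n → ℝ, (∀ i, 0 ≤ u i) → (∀ i, 0 ≤ v i) → ∀ t : ℝ, 0 ≤ t → t ≤ 1 →
      ρ (Matrix.diagonal (t • u + (1 - t) • v)) ≤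
        t * ρ (Matrix.diagonal u) + (1 - t) * ρ (Matrix.diagonal v) := by
    intro u v hu hv t ht0 ht1
    have hd : Matrix.diagonal (t • u + (1 - t) • v)
        = t • Matrix.diagonal u + (1 - t) • Matrix.diagonal v := by
      ext i j
      by_cases h : i = j <;> simp [Matrix.diagonal_apply, h]
    rw [hd]
    exact hconv _ _ (hdiag u hu) (hdiag v hv) t ht0 ht1
  rw [rho_diag ρ hinv L₁ h₁, rho_diag ρ hinv L₂ h₂]
  exact core_schur (fun v => ρ (Matrix.diagonal v)) hperm hcvx
    (Finset.univ.filter fun i =>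
      decEigenvalues L₁ i ≠ decEigenvalues L₂ i).card
    (decEigenvalues L₁) (decEigenvalues L₂) le_rfl
    (decEigenvalues_nonneg L₁ h₁) (decEigenvalues_nonneg L₂ h₂)
    (decEigenvalues_antitone L₂ h₂.isHermitian) hmaj
end

section
/- Let L be the Laplacian of a connected weighted graph on n nodes with eigenvalues 0 = λ₁ < λ₂ ≤ … ≤ λₙ, let 1 ≤ k ≤ n−2, and let L̂ be an n×n real symmetric positive semidefinite matrix of rank at most k. Let φ : [0,∞) → [0,∞) be a decreasing convex function. Then Σ_{i=2}^{n} φ(λ_i(L + L̂)) ≥ Σ_{i=k+2}^{n} φ(λ_i(L)), where λ_i(L+L̂) denote the eigenvalues of L + L̂ listed in increasing order. -/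
open Filter Finset Matrix

/-- `L` is the Laplacian matrix of a connected weighted graph: symmetric positive semidefinite,
`L 𝟙 = 0`, and the kernel of `L` is exactly the span of the all-ones vector. -/
def IsConnLaplacian {n : ℕ} (L : Matrix (Fin n) (Fin n) ℝ) : Prop :=
  L.PosSemidef ∧ (L *ᵥ (fun _ => (1 : ℝ)) = 0) ∧
    ∀ v : Fin n → ℝ, L *ᵥ v = 0 → ∃ c : ℝ, v = fun _ => c

namespace FLaux
variable {n : ℕ} {A : Matrix (Fin n) (Fin n) ℝ}

lemma sortedEigenvalues_eq (hA : A.IsHermitian) :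
    sortedEigenvalues A = hA.eigenvalues ∘ Tuple.sort hA.eigenvalues := by
  rw [sortedEigenvalues, dif_pos hA]

lemma sorted_mono (hA : A.IsHermitian) : Monotone (sortedEigenvalues A) := by
  rw [sortedEigenvalues_eq hA]; exact Tuple.monotone_sort _

noncomputable def sb (hA : A.IsHermitian) :
    OrthonormalBasis (Fin n) ℝ (EuclideanSpace ℝ (Fin n)) :=
  hA.eigenvectorBasis.reindex (Tuple.sort hA.eigenvalues).symm

lemma toEuclideanLin_sb (hA : A.IsHermitian) (j : Fin n) :
    Matrix.toEuclideanLin A (sb hA j) = sortedEigenvalues A j • sb hA j := by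
  have h := hA.mulVec_eigenvectorBasis (Tuple.sort hA.eigenvalues j)
  have : sb hA j = hA.eigenvectorBasis (Tuple.sort hA.eigenvalues j) := by
    simp [sb, OrthonormalBasis.reindex_apply]
  rw [this, sortedEigenvalues_eq hA]
  apply (WithLp.equiv 2 _).injective
  simpa [Matrix.toEuclideanLin_apply] using h

lemma inner_eq_sum_repr (B : OrthonormalBasis (Fin n) ℝ (EuclideanSpace ℝ (Fin n)))
    (u w : EuclideanSpace ℝ (Fin n)) :
    (inner ℝ u w) = ∑ j, B.repr u j * B.repr w j := by
  have h := B.repr.inner_map_map u w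
  simp only [PiLp.inner_apply, RCLike.inner_apply, conj_trivial] at h ⊢
  rw [← h]
  exact Finset.sum_congr rfl fun i _ => mul_comm _ _

lemma repr_toEuclideanLin (hA : A.IsHermitian) (x : EuclideanSpace ℝ (Fin n)) (j : Fin n) :
    (sb hA).repr (Matrix.toEuclideanLin A x) j = sortedEigenvalues A j * (sb hA).repr x j := by
  rw [OrthonormalBasis.repr_apply_apply, OrthonormalBasis.repr_apply_apply]
  have hsymm := (Matrix.isHermitian_iff_isSymmetric.mp hA)
  rw [← hsymm (sb hA j) x, toEuclideanLin_sb hA j]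
  simp [real_inner_smul_left, PiLp.inner_apply, RCLike.inner_apply, conj_trivial,
    Finset.mul_sum, mul_assoc]
  exact Finset.sum_congr rfl fun i _ => by ring

lemma inner_toEuclideanLin (hA : A.IsHermitian) (x : EuclideanSpace ℝ (Fin n)) :
    (inner ℝ x (Matrix.toEuclideanLin A x))
      = ∑ j, sortedEigenvalues A j * ((sb hA).repr x j)^2 := by
  rw [inner_eq_sum_repr (sb hA)]
  refine Finset.sum_congr rfl fun j _ => ?_
  rw [repr_toEuclideanLin hA]; ring

lemma inner_self_eq (hA : A.IsHermitian) (x : EuclideanSpace ℝ (Fin n)) :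
    (inner ℝ x x) = ∑ j, ((sb hA).repr x j)^2 := by
  rw [inner_eq_sum_repr (sb hA)]
  exact Finset.sum_congr rfl fun j _ => (sq _).symm

lemma repr_eq_zero_of_mem_span (hA : A.IsHermitian) {s : Set (Fin n)}
    {x : EuclideanSpace ℝ (Fin n)} (hx : x ∈ Submodule.span ℝ (sb hA '' s))
    {j : Fin n} (hj : j ∉ s) : (sb hA).repr x j = 0 := by
  rw [← OrthonormalBasis.coe_toBasis (sb hA)] at hx
  rw [Module.Basis.mem_span_image] at hx
  rw [← OrthonormalBasis.coe_toBasis_repr_apply]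
  by_contra h
  exact hj (hx (Finsupp.mem_support_iff.mpr h))

lemma finrank_span_sb (hA : A.IsHermitian) (s : Finset (Fin n)) :
    Module.finrank ℝ (Submodule.span ℝ (sb hA '' ↑s)) = s.card := by
  have hli : LinearIndependent ℝ (fun j : (↑s : Set (Fin n)) => sb hA j) := by
    have := (sb hA).toBasis.linearIndependent.comp
      ((↑) : (↑s : Set (Fin n)) → Fin n) Subtype.val_injective
    simpa [Function.comp_def] using this
  rw [Set.image_eq_range, finrank_span_eq_card hli]
  simp

lemma rayleigh_ge_of_dim (hA : A.IsHermitian) (S : Submodule ℝ (EuclideanSpace ℝ (Fin n)))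
    (i : Fin n) (hS : (i : ℕ) + 1 ≤ Module.finrank ℝ S) :
    ∃ x, x ∈ S ∧ x ≠ 0 ∧
      sortedEigenvalues A i * (inner ℝ x x) ≤ (inner ℝ x (Matrix.toEuclideanLin A x)) := by
  set T : Submodule ℝ (EuclideanSpace ℝ (Fin n)) :=
    Submodule.span ℝ (sb hA '' ↑(Finset.Ici i)) with hT
  have hTrank : Module.finrank ℝ T = n - (i : ℕ) := by
    rw [hT, finrank_span_sb hA, Fin.card_Ici]
  obtain ⟨x, hxST, hx0⟩ : ∃ x, x ∈ S ⊓ T ∧ x ≠ 0 := by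
    apply Submodule.exists_mem_ne_zero_of_ne_bot
    intro hbot
    have h1 := Submodule.finrank_sup_add_finrank_inf_eq S T
    have h2 : Module.finrank ℝ ↥(S ⊔ T) ≤ n := by
      simpa [finrank_euclideanSpace_fin] using (S ⊔ T).finrank_le
    rw [hbot] at h1
    simp only [finrank_bot, add_zero] at h1
    have := i.isLt
    omega
  refine ⟨x, hxST.1, hx0, ?_⟩
  rw [inner_toEuclideanLin hA, inner_self_eq hA, Finset.mul_sum]
  apply Finset.sum_le_sum
  intro j _
  by_cases hj : i ≤ j
  · have := mul_le_mul_of_nonneg_right (sorted_mono hA hj) (sq_nonneg ((sb hA).repr x j))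
    linarith
  · have : (sb hA).repr x j = 0 :=
      repr_eq_zero_of_mem_span hA hxST.2 (by simpa using hj)
    simp [this]

lemma rayleigh_le_of_mem (hA : A.IsHermitian) (m : Fin n)
    {x : EuclideanSpace ℝ (Fin n)}
    (hx : x ∈ Submodule.span ℝ (sb hA '' ↑(Finset.Iic m))) :
    (inner ℝ x (Matrix.toEuclideanLin A x)) ≤ sortedEigenvalues A m * (inner ℝ x x) := by
  rw [inner_toEuclideanLin hA, inner_self_eq hA, Finset.mul_sum]
  apply Finset.sum_le_sum
  intro j _
  by_cases hj : j ≤ m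
  · exact mul_le_mul_of_nonneg_right (sorted_mono hA hj) (sq_nonneg _)
  · have : (sb hA).repr x j = 0 :=
      repr_eq_zero_of_mem_span hA hx (by simpa using hj)
    simp [this]

lemma sorted_le_shift {B : Matrix (Fin n) (Fin n) ℝ} (hA : A.IsHermitian) (hB : B.IsHermitian)
    (i j : Fin n) (hij : B.rank + (i : ℕ) ≤ (j : ℕ)) :
    sortedEigenvalues (A + B) i ≤ sortedEigenvalues A j := by
  have hAB : (A + B).IsHermitian := hA.add hB
  set K : Submodule ℝ (EuclideanSpace ℝ (Fin n)) :=
    LinearMap.ker (Matrix.toEuclideanLin B) with hK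
  have hKrank : n - B.rank ≤ Module.finrank ℝ K := by
    have h1 := LinearMap.finrank_range_add_finrank_ker (Matrix.toEuclideanLin B)
    have h2 : Module.finrank ℝ (LinearMap.range (Matrix.toEuclideanLin B)) = B.rank := by
      rw [Matrix.toEuclideanLin_eq_toLin]
      exact (Matrix.rank_eq_finrank_range_toLin B _ _).symm
    rw [h2, finrank_euclideanSpace_fin, ← hK] at h1
    omega
  set T : Submodule ℝ (EuclideanSpace ℝ (Fin n)) :=
    Submodule.span ℝ (sb hA '' ↑(Finset.Iic j)) with hT
  have hTrank : Module.finrank ℝ T = (j : ℕ) + 1 := by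
    rw [hT, finrank_span_sb hA, Fin.card_Iic]
  have hdim : (i : ℕ) + 1 ≤ Module.finrank ℝ ↥(T ⊓ K) := by
    have h1 := Submodule.finrank_sup_add_finrank_inf_eq T K
    have h2 : Module.finrank ℝ ↥(T ⊔ K) ≤ n := by
      simpa [finrank_euclideanSpace_fin] using (T ⊔ K).finrank_le
    have hjn := j.isLt
    rw [hTrank] at h1
    omega
  obtain ⟨x, hxTK, hx0, hray⟩ := rayleigh_ge_of_dim hAB (T ⊓ K) i hdim
  have hxpos : (0:ℝ) < inner ℝ x x :=
    lt_of_le_of_ne real_inner_self_nonneg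
      (fun h => hx0 (inner_self_eq_zero.mp h.symm))
  have hBx : Matrix.toEuclideanLin B x = 0 := hxTK.2
  have hsplit : (inner ℝ x (Matrix.toEuclideanLin (A + B) x))
      = inner ℝ x (Matrix.toEuclideanLin A x) := by
    rw [map_add, LinearMap.add_apply, inner_add_right, hBx, inner_zero_right, add_zero]
  have hupper := rayleigh_le_of_mem hA j hxTK.1
  rw [hsplit] at hray
  have := hray.trans hupper
  exact le_of_mul_le_mul_right this hxpos

lemma sorted_nonneg {B : Matrix (Fin n) (Fin n) ℝ} (hB : B.PosSemidef) (i : Fin n) :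
    0 ≤ sortedEigenvalues B i := by
  rw [sortedEigenvalues_eq hB.1]
  exact hB.eigenvalues_nonneg _

end FLaux

/-- Fundamental limit: augmenting a connected-graph Laplacian by a PSD matrix of rank at most
`k` cannot reduce Σ_{i=2}^{n} φ(λ_i) below Σ_{i=k+2}^{n} φ(λ_i(L)). -/
theorem fundamental_limit_lower_bound {n k : ℕ}
    (L Lhat : Matrix (Fin n) (Fin n) ℝ)
    (hL : IsConnLaplacian L) (hk1 : 1 ≤ k) (hk2 : k ≤ n - 2)
    (hLhat : Lhat.PosSemidef) (hrank : Lhat.rank ≤ k)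
    (φ : ℝ → ℝ) (hanti : AntitoneOn φ (Set.Ici 0)) (hconv : ConvexOn ℝ (Set.Ici 0) φ)
    (hnonneg : ∀ x ∈ Set.Ici (0 : ℝ), 0 ≤ φ x) :
    ∑ i ∈ Finset.univ.filter (fun i : Fin n => k + 1 ≤ (i : ℕ)),
        φ (sortedEigenvalues L i) ≤
      ∑ i ∈ Finset.univ.filter (fun i : Fin n => 1 ≤ (i : ℕ)),
        φ (sortedEigenvalues (L + Lhat) i) := by
  have hLpsd : L.PosSemidef := hL.1
  have hSum : (L + Lhat).PosSemidef := hLpsd.add hLhat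
  have hg0 : ∀ i : Fin n, 0 ≤ sortedEigenvalues (L + Lhat) i :=
    FLaux.sorted_nonneg hSum
  have hf0 : ∀ i : Fin n, 0 ≤ sortedEigenvalues L i := FLaux.sorted_nonneg hLpsd
  set ι : Fin n → Fin n := fun j => ⟨(j : ℕ) - k, lt_of_le_of_lt (Nat.sub_le _ _) j.isLt⟩
    with hι
  have key : ∀ j : Fin n, k ≤ (j : ℕ) →
      sortedEigenvalues (L + Lhat) (ι j) ≤ sortedEigenvalues L j := by
    intro j hj
    apply FLaux.sorted_le_shift hLpsd.1 hLhat.1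
    simp only [hι]
    omega
  calc ∑ j ∈ Finset.univ.filter (fun j : Fin n => k + 1 ≤ (j : ℕ)),
        φ (sortedEigenvalues L j)
      ≤ ∑ j ∈ Finset.univ.filter (fun j : Fin n => k + 1 ≤ (j : ℕ)),
        φ (sortedEigenvalues (L + Lhat) (ι j)) := by
        apply Finset.sum_le_sum
        intro j hj
        rw [Finset.mem_filter] at hj
        exact hanti (hg0 _) (hf0 _) (key j (by omega))
    _ = ∑ i ∈ (Finset.univ.filter (fun j : Fin n => k + 1 ≤ (j : ℕ))).image ι,
        φ (sortedEigenvalues (L + Lhat) i) := by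
        rw [Finset.sum_image]
        intro a ha b hb hab
        rw [Finset.mem_coe, Finset.mem_filter] at ha hb
        simp only [hι, Fin.mk.injEq] at hab
        exact Fin.ext (by omega)
    _ ≤ ∑ i ∈ Finset.univ.filter (fun i : Fin n => 1 ≤ (i : ℕ)),
        φ (sortedEigenvalues (L + Lhat) i) := by
        apply Finset.sum_le_sum_of_subset_of_nonneg
        · intro i hi
          rw [Finset.mem_image] at hi
          obtain ⟨j, hj, rfl⟩ := hi
          rw [Finset.mem_filter] at hj ⊢
          refine ⟨Finset.mem_univ _, ?_⟩
          simp only [hι]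
          omega
        · intro i _ _
          exact hnonneg _ (hg0 i)
end

section
/- Let L be the Laplacian of a connected weighted graph on n nodes with eigenvalues 0 = λ₁ < λ₂ ≤ … ≤ λₙ, let 1 ≤ k ≤ n−2, and let L̂ be an n×n real symmetric positive semidefinite matrix with L̂𝟙 = 0 and rank exactly k. Let φ : (0,∞) → [0,∞) be a continuous decreasing convex function with lim_{λ→∞} φ(λ) = 0. Then limsup_{κ→∞} Σ_{i=2}^{n} φ(λ_i(L + κ L̂)) ≤ Σ_{i=2}^{n−k} φ(λ_i(L)), where λ_i(L + κL̂) denote the eigenvalues of L + κL̂ listed in increasing order. -/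
open Filter Finset Matrix RealInnerProductSpace

namespace SortedEigAux

variable {n : ℕ}

lemma sortedEigenvalues_eq {A : Matrix (Fin n) (Fin n) ℝ} (hA : A.IsHermitian) (i : Fin n) :
    sortedEigenvalues A i = hA.eigenvalues (Tuple.sort hA.eigenvalues i) := by
  simp only [sortedEigenvalues, dif_pos hA, Function.comp_apply]

lemma sortedEigenvalues_monotone {A : Matrix (Fin n) (Fin n) ℝ} (hA : A.IsHermitian) :
    Monotone (sortedEigenvalues A) := by
  have := Tuple.monotone_sort hA.eigenvalues
  intro i j hij
  simpa [sortedEigenvalues_eq hA] using this hij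

/-- sorted orthonormal eigenbasis -/
noncomputable def sB {A : Matrix (Fin n) (Fin n) ℝ} (hA : A.IsHermitian) :
    OrthonormalBasis (Fin n) ℝ (EuclideanSpace ℝ (Fin n)) :=
  hA.eigenvectorBasis.reindex (Tuple.sort hA.eigenvalues).symm

lemma mulVec_sB {A : Matrix (Fin n) (Fin n) ℝ} (hA : A.IsHermitian) (i : Fin n) :
    toEuclideanLin A (sB hA i) = sortedEigenvalues A i • sB hA i := by
  have h := hA.mulVec_eigenvectorBasis (Tuple.sort hA.eigenvalues i)
  show (WithLp.equiv 2 _).symm (A *ᵥ (WithLp.equiv 2 _) _) = _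
  rw [sortedEigenvalues_eq hA]
  simp only [sB, OrthonormalBasis.reindex_apply, Equiv.symm_symm]
  exact congrArg _ h

lemma inner_toEuclideanLin_comm {A : Matrix (Fin n) (Fin n) ℝ} (hA : A.IsHermitian)
    (x y : EuclideanSpace ℝ (Fin n)) :
    ⟪toEuclideanLin A x, y⟫ = ⟪x, toEuclideanLin A y⟫ :=
  (Matrix.isHermitian_iff_isSymmetric.1 hA) x y

/-- quadratic form formula -/
lemma quad_eq {A : Matrix (Fin n) (Fin n) ℝ} (hA : A.IsHermitian)
    (x : EuclideanSpace ℝ (Fin n)) :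
    ⟪x, toEuclideanLin A x⟫ = ∑ j, sortedEigenvalues A j * ⟪sB hA j, x⟫ ^ 2 := by
  rw [← (sB hA).sum_inner_mul_inner x (toEuclideanLin A x)]
  refine Finset.sum_congr rfl fun j _ => ?_
  rw [← inner_toEuclideanLin_comm hA, mulVec_sB hA j, inner_smul_left,
    real_inner_comm x (sB hA j)]
  ring_nf
  simp [RCLike.star_def, mul_comm]

lemma inner_self_formula {A : Matrix (Fin n) (Fin n) ℝ} (hA : A.IsHermitian)
    (x : EuclideanSpace ℝ (Fin n)) :
    ⟪x, x⟫ = ∑ j, ⟪sB hA j, x⟫ ^ 2 := by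
  rw [← (sB hA).sum_inner_mul_inner x x]
  refine Finset.sum_congr rfl fun j _ => ?_
  rw [real_inner_comm x (sB hA j)]; ring

/-- coefficients vanish outside the index set of the span -/
lemma inner_eq_zero_of_mem_span {A : Matrix (Fin n) (Fin n) ℝ} (hA : A.IsHermitian)
    {S : Set (Fin n)} {x : EuclideanSpace ℝ (Fin n)}
    (hx : x ∈ Submodule.span ℝ (sB hA '' S)) {j : Fin n} (hj : j ∉ S) :
    ⟪sB hA j, x⟫ = 0 := by
  induction hx using Submodule.span_induction with
  | mem y hy =>
    obtain ⟨i, hi, rfl⟩ := hy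
    exact (sB hA).orthonormal.2 (fun h => hj (h ▸ hi))
  | zero => simp
  | add y z _ _ hy hz => rw [inner_add_right, hy, hz, add_zero]
  | smul c y _ hy => rw [inner_smul_right, hy, mul_zero]

lemma finrank_span_sB {A : Matrix (Fin n) (Fin n) ℝ} (hA : A.IsHermitian)
    (S : Finset (Fin n)) :
    Module.finrank ℝ (Submodule.span ℝ (sB hA '' (S : Set (Fin n)))) = S.card := by
  have hli : LinearIndependent ℝ (fun s : (S : Set (Fin n)) => sB hA s) :=
    ((sB hA).orthonormal.comp _ Subtype.val_injective).linearIndependent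
  have : (sB hA '' (S : Set (Fin n))) = Set.range (fun s : (S : Set (Fin n)) => sB hA s) := by
    rw [Set.image_eq_range]
  rw [this, finrank_span_eq_card hli]
  simp

/-- quadratic form lower bound on upper spans -/
lemma quad_ge_on_span {A : Matrix (Fin n) (Fin n) ℝ} (hA : A.IsHermitian) (i : Fin n)
    {x : EuclideanSpace ℝ (Fin n)}
    (hx : x ∈ Submodule.span ℝ (sB hA '' (Finset.Ici i : Finset (Fin n)))) :
    sortedEigenvalues A i * ⟪x, x⟫ ≤ ⟪x, toEuclideanLin A x⟫ := by
  rw [quad_eq hA, inner_self_formula hA, Finset.mul_sum]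
  refine Finset.sum_le_sum fun j _ => ?_
  by_cases hj : j ∈ (Finset.Ici i : Finset (Fin n))
  · have : sortedEigenvalues A i ≤ sortedEigenvalues A j :=
      sortedEigenvalues_monotone hA (Finset.mem_Ici.1 hj)
    exact mul_le_mul_of_nonneg_right this (sq_nonneg _)
  · rw [inner_eq_zero_of_mem_span hA hx (by simpa using hj)]
    simp

/-- quadratic form upper bound on lower spans -/
lemma quad_le_on_span {A : Matrix (Fin n) (Fin n) ℝ} (hA : A.IsHermitian) (i : Fin n)
    {x : EuclideanSpace ℝ (Fin n)}
    (hx : x ∈ Submodule.span ℝ (sB hA '' (Finset.Iic i : Finset (Fin n)))) :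
    ⟪x, toEuclideanLin A x⟫ ≤ sortedEigenvalues A i * ⟪x, x⟫ := by
  rw [quad_eq hA, inner_self_formula hA, Finset.mul_sum]
  refine Finset.sum_le_sum fun j _ => ?_
  by_cases hj : j ∈ (Finset.Iic i : Finset (Fin n))
  · have : sortedEigenvalues A j ≤ sortedEigenvalues A i :=
      sortedEigenvalues_monotone hA (Finset.mem_Iic.1 hj)
    exact mul_le_mul_of_nonneg_right this (sq_nonneg _)
  · rw [inner_eq_zero_of_mem_span hA hx (by simpa using hj)]
    simp

/-- key min-max style lower bound -/
lemma le_sortedEigenvalues_of_subspace {B : Matrix (Fin n) (Fin n) ℝ} (hB : B.IsHermitian)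
    (i : Fin n) (t : ℝ) (W : Submodule ℝ (EuclideanSpace ℝ (Fin n)))
    (hdim : n ≤ Module.finrank ℝ W + (i : ℕ))
    (hquad : ∀ x ∈ W, t * ⟪x, x⟫ ≤ ⟪x, toEuclideanLin B x⟫) :
    t ≤ sortedEigenvalues B i := by
  set W' := Submodule.span ℝ (sB hB '' (Finset.Iic i : Finset (Fin n))) with hW'
  have hdW' : Module.finrank ℝ W' = (i : ℕ) + 1 := by
    rw [hW', finrank_span_sB hB, Fin.card_Iic]
  have hne : W ⊓ W' ≠ ⊥ := by
    intro hbot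
    have := Submodule.finrank_sup_add_finrank_inf_eq W W'
    rw [hbot] at this
    have hle : Module.finrank ℝ ↥(W ⊔ W') ≤ n := by
      simpa [finrank_euclideanSpace] using Submodule.finrank_le (W ⊔ W')
    simp [hdW'] at this
    omega
  obtain ⟨x, hxmem, hxne⟩ := Submodule.exists_mem_ne_zero_of_ne_bot hne
  have hx1 : t * ⟪x, x⟫ ≤ ⟪x, toEuclideanLin B x⟫ := hquad x hxmem.1
  have hx2 : ⟪x, toEuclideanLin B x⟫ ≤ sortedEigenvalues B i * ⟪x, x⟫ :=
    quad_le_on_span hB i hxmem.2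
  have hpos : 0 < ⟪x, x⟫ :=
    lt_of_le_of_ne real_inner_self_nonneg (Ne.symm (inner_self_ne_zero.2 hxne))
  exact le_of_mul_le_mul_right (hx1.trans hx2) hpos

lemma psd_quad_nonneg {M : Matrix (Fin n) (Fin n) ℝ} (hM : M.PosSemidef)
    (x : EuclideanSpace ℝ (Fin n)) : 0 ≤ ⟪x, toEuclideanLin M x⟫ := by
  have := hM.dotProduct_mulVec_nonneg ((WithLp.equiv 2 _) x)
  simpa [toEuclideanLin_apply, PiLp.inner_apply, dotProduct, RCLike.inner_apply, mul_comm] using this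

end SortedEigAux

namespace SortedEigAux

variable {n : ℕ}

lemma card_sorted_nonzero {M : Matrix (Fin n) (Fin n) ℝ} (hM : M.IsHermitian) :
    (Finset.univ.filter fun i : Fin n => sortedEigenvalues M i ≠ 0).card = M.rank := by
  rw [hM.rank_eq_card_non_zero_eigs, Fintype.card_subtype]
  apply Finset.card_bij (fun i _ => Tuple.sort hM.eigenvalues i)
  · intro a ha
    simp only [mem_filter, mem_univ, true_and] at *
    rwa [sortedEigenvalues_eq hM] at ha
  · intro a _ b _ h
    exact (Tuple.sort hM.eigenvalues).injective h
  · intro b hb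
    refine ⟨(Tuple.sort hM.eigenvalues).symm b, ?_, by simp⟩
    simp only [mem_filter, mem_univ, true_and] at *
    rw [sortedEigenvalues_eq hM]
    simpa using hb

lemma sorted_nonneg {M : Matrix (Fin n) (Fin n) ℝ} (hM : M.PosSemidef) (i : Fin n) :
    0 ≤ sortedEigenvalues M i := by
  rw [sortedEigenvalues_eq hM.isHermitian]
  exact hM.eigenvalues_nonneg _

lemma sorted_pos_of_rank {M : Matrix (Fin n) (Fin n) ℝ} (hM : M.PosSemidef) {r : ℕ}
    (hr : M.rank = r) (i : Fin n) (hi : n - r ≤ (i : ℕ)) : 0 < sortedEigenvalues M i := by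
  rcases (sorted_nonneg hM i).lt_or_eq with h | h
  · exact h
  exfalso
  have hsub : (Finset.univ.filter fun j : Fin n => sortedEigenvalues M j ≠ 0)
      ⊆ Finset.Ioi i := by
    intro j hj
    simp only [mem_filter, mem_univ, true_and] at hj
    rw [Finset.mem_Ioi]
    by_contra hji
    push_neg at hji
    exact hj (le_antisymm ((sortedEigenvalues_monotone hM.isHermitian hji).trans h.ge)
      (sorted_nonneg hM j))
  have hcard := Finset.card_le_card hsub
  rw [card_sorted_nonzero hM.isHermitian, hr, Fin.card_Ioi] at hcard
  have := i.isLt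
  omega

lemma rank_of_connLaplacian {L : Matrix (Fin n) (Fin n) ℝ} (hn : 0 < n)
    (hL : IsConnLaplacian L) : L.rank = n - 1 := by
  obtain ⟨hpsd, hone, hker⟩ := hL
  have hkereq : LinearMap.ker L.mulVecLin
      = Submodule.span ℝ {((fun _ => (1:ℝ)) : Fin n → ℝ)} := by
    apply le_antisymm
    · intro v hv
      rw [LinearMap.mem_ker, mulVecLin_apply] at hv
      obtain ⟨c, rfl⟩ := hker v hv
      exact Submodule.mem_span_singleton.2 ⟨c, by funext j; simp⟩
    · rw [Submodule.span_singleton_le_iff_mem, LinearMap.mem_ker, mulVecLin_apply]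
      exact hone
  have hone_ne : ((fun _ => (1:ℝ)) : Fin n → ℝ) ≠ 0 := by
    intro h
    have := congrFun h ⟨0, hn⟩
    simp at this
  have h1 : Module.finrank ℝ (LinearMap.ker L.mulVecLin) = 1 := by
    rw [hkereq]; exact finrank_span_singleton hone_ne
  have h2 := LinearMap.finrank_range_add_finrank_ker L.mulVecLin
  rw [h1] at h2
  have h3 : Module.finrank ℝ (Fin n → ℝ) = n := by simp
  rw [h3] at h2
  unfold Matrix.rank
  omega

end SortedEigAux

namespace SortedEigAux

variable {n : ℕ}

lemma herm_add_smul {L Lhat : Matrix (Fin n) (Fin n) ℝ} (hLh : L.IsHermitian)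
    (hLhatH : Lhat.IsHermitian) (κ : ℝ) : (L + κ • Lhat).IsHermitian := by
  unfold Matrix.IsHermitian at *
  rw [conjTranspose_add, conjTranspose_smul, hLh, hLhatH]
  simp

lemma toEuclideanLin_add_smul (L Lhat : Matrix (Fin n) (Fin n) ℝ) (κ : ℝ)
    (x : EuclideanSpace ℝ (Fin n)) :
    toEuclideanLin (L + κ • Lhat) x = toEuclideanLin L x + κ • toEuclideanLin Lhat x := by
  simp [map_add, _root_.map_smul]

lemma le_sorted_add {L Lhat : Matrix (Fin n) (Fin n) ℝ} (hLpsd : L.PosSemidef)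
    (hLhat : Lhat.PosSemidef) {κ : ℝ} (hκ : 0 ≤ κ) (i : Fin n) :
    sortedEigenvalues L i ≤ sortedEigenvalues (L + κ • Lhat) i := by
  apply le_sortedEigenvalues_of_subspace (herm_add_smul hLpsd.isHermitian hLhat.isHermitian κ) i _
    (Submodule.span ℝ (sB hLpsd.isHermitian '' (Finset.Ici i : Finset (Fin n))))
  · rw [finrank_span_sB, Fin.card_Ici]
    have := i.isLt
    omega
  · intro x hx
    rw [toEuclideanLin_add_smul, inner_add_right, inner_smul_right]
    have h1 := quad_ge_on_span hLpsd.isHermitian i hx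
    have h2 : 0 ≤ ⟪x, toEuclideanLin Lhat x⟫ := psd_quad_nonneg hLhat x
    nlinarith

lemma smul_le_sorted_add {L Lhat : Matrix (Fin n) (Fin n) ℝ} (hLpsd : L.PosSemidef)
    (hLhat : Lhat.PosSemidef) {κ : ℝ} (hκ : 0 ≤ κ) (i : Fin n) :
    κ * sortedEigenvalues Lhat i ≤ sortedEigenvalues (L + κ • Lhat) i := by
  apply le_sortedEigenvalues_of_subspace (herm_add_smul hLpsd.isHermitian hLhat.isHermitian κ) i _
    (Submodule.span ℝ (sB hLhat.isHermitian '' (Finset.Ici i : Finset (Fin n))))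
  · rw [finrank_span_sB, Fin.card_Ici]
    have := i.isLt
    omega
  · intro x hx
    rw [toEuclideanLin_add_smul, inner_add_right, inner_smul_right]
    have h1 := quad_ge_on_span hLhat.isHermitian i hx
    have h2 : 0 ≤ ⟪x, toEuclideanLin L x⟫ := psd_quad_nonneg hLpsd x
    nlinarith [mul_le_mul_of_nonneg_left h1 hκ]

end SortedEigAux

open SortedEigAux in
/-- Upper bound on the asymptotic performance obtained by adding a rank-`k` Laplacian
perturbation with ever larger weights. -/
theorem limsup_performance_upper_bound {n k : ℕ}
    (L Lhat : Matrix (Fin n) (Fin n) ℝ)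
    (hL : IsConnLaplacian L) (hk1 : 1 ≤ k) (hk2 : k ≤ n - 2)
    (hLhat : Lhat.PosSemidef) (hone : Lhat *ᵥ (fun _ => (1 : ℝ)) = 0)
    (hrank : Lhat.rank = k)
    (φ : ℝ → ℝ) (hcont : ContinuousOn φ (Set.Ioi 0))
    (hanti : AntitoneOn φ (Set.Ioi 0)) (hconv : ConvexOn ℝ (Set.Ioi 0) φ)
    (hnonneg : ∀ x ∈ Set.Ioi (0 : ℝ), 0 ≤ φ x)
    (hlim : Tendsto φ atTop (nhds 0)) :
    limsup (fun κ : ℝ =>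
        ∑ i ∈ Finset.univ.filter (fun i : Fin n => 1 ≤ (i : ℕ)),
          φ (sortedEigenvalues (L + κ • Lhat) i)) atTop ≤
      ∑ i ∈ Finset.univ.filter (fun i : Fin n => 1 ≤ (i : ℕ) ∧ (i : ℕ) + k < n),
        φ (sortedEigenvalues L i) := by
  classical
  have hn : 0 < n := by omega
  have hLpsd := hL.1
  have hrankL : L.rank = n - 1 := rank_of_connLaplacian hn hL
  have hposL : ∀ i : Fin n, 1 ≤ (i : ℕ) → 0 < sortedEigenvalues L i := fun i hi =>
    sorted_pos_of_rank hLpsd hrankL i (by omega)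
  have hposLhat : ∀ i : Fin n, ¬((i : ℕ) + k < n) → 0 < sortedEigenvalues Lhat i := fun i hi =>
    sorted_pos_of_rank hLhat hrank i (by omega)
  set S := Finset.univ.filter (fun i : Fin n => 1 ≤ (i : ℕ)) with hS
  set Smid := Finset.univ.filter (fun i : Fin n => 1 ≤ (i : ℕ) ∧ (i : ℕ) + k < n) with hSmid
  set Stop := Finset.univ.filter (fun i : Fin n => 1 ≤ (i : ℕ) ∧ ¬((i : ℕ) + k < n)) with hStop
  set C := ∑ i ∈ Smid, φ (sortedEigenvalues L i) with hC
  set g : ℝ → ℝ := fun κ => C + ∑ i ∈ Stop, φ (κ * sortedEigenvalues Lhat i) with hg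
  have hsplit : ∀ u : Fin n → ℝ, ∑ i ∈ Smid, u i + ∑ i ∈ Stop, u i = ∑ i ∈ S, u i := by
    intro u
    rw [hSmid, hStop, hS, ← Finset.filter_filter, ← Finset.filter_filter]
    exact Finset.sum_filter_add_sum_filter_not _ _ u
  have htop0 : Tendsto (fun κ : ℝ => ∑ i ∈ Stop, φ (κ * sortedEigenvalues Lhat i))
      atTop (nhds 0) := by
    have h := tendsto_finset_sum Stop (fun i hi =>
      hlim.comp ((tendsto_id (α := ℝ)).atTop_mul_const
        (hposLhat i (Finset.mem_filter.1 hi).2.2)))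
    simpa using h
  have hgt : Tendsto g atTop (nhds C) := by
    have := (tendsto_const_nhds (x := C) (f := atTop (α := ℝ))).add htop0
    simpa using this
  have hfg : ∀ᶠ κ : ℝ in atTop,
      (∑ i ∈ S, φ (sortedEigenvalues (L + κ • Lhat) i)) ≤ g κ := by
    filter_upwards [eventually_ge_atTop (1 : ℝ)] with κ hκ1
    have hκ0 : (0 : ℝ) ≤ κ := le_trans zero_le_one hκ1
    rw [← hsplit]
    apply add_le_add
    · apply Finset.sum_le_sum
      intro i hi
      have hi1 := (Finset.mem_filter.1 hi).2.1
      have hL0 := hposL i hi1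
      have hle := le_sorted_add hLpsd hLhat hκ0 i
      exact hanti (Set.mem_Ioi.2 hL0) (Set.mem_Ioi.2 (lt_of_lt_of_le hL0 hle)) hle
    · apply Finset.sum_le_sum
      intro i hi
      have hi2 := (Finset.mem_filter.1 hi).2.2
      have hc := hposLhat i hi2
      have hκc : 0 < κ * sortedEigenvalues Lhat i :=
        mul_pos (lt_of_lt_of_le one_pos hκ1) hc
      have hle := smul_le_sorted_add hLpsd hLhat hκ0 i
      exact hanti (Set.mem_Ioi.2 hκc) (Set.mem_Ioi.2 (lt_of_lt_of_le hκc hle)) hle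
  have hf0 : ∀ᶠ κ : ℝ in atTop,
      (0 : ℝ) ≤ ∑ i ∈ S, φ (sortedEigenvalues (L + κ • Lhat) i) := by
    filter_upwards [eventually_ge_atTop (0 : ℝ)] with κ hκ0
    apply Finset.sum_nonneg
    intro i hi
    have hi1 := (Finset.mem_filter.1 hi).2
    have hL0 := hposL i hi1
    have hle := le_sorted_add hLpsd hLhat hκ0 i
    exact hnonneg _ (Set.mem_Ioi.2 (lt_of_lt_of_le hL0 hle))
  calc limsup (fun κ : ℝ => ∑ i ∈ S, φ (sortedEigenvalues (L + κ • Lhat) i)) atTop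
      ≤ limsup g atTop :=
        limsup_le_limsup hfg (isCoboundedUnder_le_of_eventually_le atTop hf0)
          hgt.isBoundedUnder_le
    _ = C := hgt.limsup_eq
end

section
/- Let L and L_T each be the Laplacian of a connected weighted graph on n nodes (in particular L_T is symmetric positive semidefinite with L_T𝟙 = 0 and rank n−1, e.g. the Laplacian of a weighted spanning tree). Let φ : (0,∞) → ℝ be a continuous decreasing convex function with lim_{λ→∞} φ(λ) = 0. Then lim_{κ→∞} Σ_{i=2}^{n} φ(λ_i(L + κ L_T)) = 0, where λ_i(L + κL_T) denote the eigenvalues of L + κL_T listed in increasing order. In words: the systemic performance measure ρ(L) = Σ_{i=2}^n φ(λ_i(L)) can be improved arbitrarily close to its ultimate limit by adding n−1 links forming a spanning tree with sufficiently large weights. -/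
open Filter Finset Matrix

lemma aux_dot_self_eq_norm_sq {n : ℕ} (x : EuclideanSpace ℝ (Fin n)) :
    (x : Fin n → ℝ) ⬝ᵥ x = ‖x‖ ^ 2 := by
  rw [← real_inner_self_eq_norm_sq]
  simp only [PiLp.inner_apply, RCLike.inner_apply, conj_trivial, dotProduct, mul_comm]

/-- Quadratic-form lower bound on the orthogonal complement of 𝟙. -/
lemma aux_exists_quadratic_lb {n : ℕ} (hn : 2 ≤ n) {M : Matrix (Fin n) (Fin n) ℝ}
    (hM : IsConnLaplacian M) :
    ∃ μ > (0:ℝ), ∀ v : Fin n → ℝ, (∑ i, v i) = 0 → μ * (v ⬝ᵥ v) ≤ v ⬝ᵥ (M *ᵥ v) := by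
  set E := EuclideanSpace ℝ (Fin n)
  set f : E → ℝ := fun v => (v : Fin n → ℝ) ⬝ᵥ (M *ᵥ v) with hf
  have hfc : Continuous f := by
    show Continuous fun v : E => ∑ i, v i * ∑ j, M i j * v j
    exact continuous_finset_sum _ fun i _ => ((EuclideanSpace.proj i).continuous.mul
      (continuous_finset_sum _ fun j _ => continuous_const.mul (EuclideanSpace.proj j).continuous))
  set K : Set E := Metric.sphere 0 1 ∩ {v : E | (∑ i, v i) = 0} with hK
  have hKc : IsCompact K := (isCompact_sphere (0:E) 1).inter_right
    (isClosed_eq (continuous_finset_sum _ fun i _ => (EuclideanSpace.proj i).continuous)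
      continuous_const)
  -- K is nonempty
  have hKne : K.Nonempty := by
    set i0 : Fin n := ⟨0, by omega⟩ with hi0
    set i1 : Fin n := ⟨1, by omega⟩ with hi1
    have h01 : i0 ≠ i1 := by simp [hi0, hi1, Fin.ext_iff]
    set w : E := EuclideanSpace.single i0 (1:ℝ) - EuclideanSpace.single i1 (1:ℝ) with hw
    have hw0 : w ≠ 0 := by
      intro h
      have : w i0 = 0 := by rw [h]; rfl
      simp [hw, EuclideanSpace.single_apply, h01] at this
    refine ⟨‖w‖⁻¹ • w, ?_, ?_⟩
    · simp [norm_smul, inv_mul_cancel₀ (norm_ne_zero_iff.mpr hw0)]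
    · show (∑ i, (‖w‖⁻¹ • w) i) = 0
      have : ∀ i, (‖w‖⁻¹ • w) i = ‖w‖⁻¹ * w i := fun i => rfl
      simp only [this, ← Finset.mul_sum]
      have : (∑ i, w i) = 0 := by
        simp [hw, EuclideanSpace.single_apply, Finset.sum_sub_distrib, PiLp.sub_apply]
      rw [this, mul_zero]
  obtain ⟨v₀, hv₀K, hmin⟩ := hKc.exists_isMinOn hKne hfc.continuousOn
  have hv₀n : ‖v₀‖ = 1 := by
    have := hv₀K.1
    simpa [mem_sphere_zero_iff_norm] using this
  have hv₀s : (∑ i, v₀ i) = 0 := hv₀K.2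
  refine ⟨f v₀, ?_, ?_⟩
  · -- positivity of the minimum
    have hnn : 0 ≤ f v₀ := by simpa [hf] using hM.1.dotProduct_mulVec_nonneg v₀.ofLp
    rcases hnn.lt_or_eq with h | h
    · exact h
    · exfalso
      have hz : M *ᵥ (v₀ : Fin n → ℝ) = 0 := by
        rw [← (hM.1.dotProduct_mulVec_zero_iff v₀)]
        simpa [hf] using h.symm
      obtain ⟨c, hc⟩ := hM.2.2 v₀ hz
      have hcs : (∑ i : Fin n, c) = 0 := by
        rw [← hv₀s]; exact Finset.sum_congr rfl fun i _ => by rw [hc]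
      have hcs' : (n:ℝ) * c = 0 := by
        simpa [Finset.sum_const, nsmul_eq_mul] using hcs
      have hc0 : c = 0 := by
        have hn0 : (n:ℝ) ≠ 0 := Nat.cast_ne_zero.mpr (by omega)
        exact (mul_eq_zero.mp hcs').resolve_left hn0
      have : v₀ = 0 := by
        ext i
        show (v₀ : Fin n → ℝ) i = 0
        rw [hc, hc0]
      rw [this] at hv₀n; simp at hv₀n
  · intro v hv
    rcases eq_or_ne v 0 with rfl | hvne
    · simp
    have hx : (0:ℝ) < (v : Fin n → ℝ) ⬝ᵥ v := by
      have hnn : (0:ℝ) ≤ v ⬝ᵥ v := Finset.sum_nonneg fun i _ => mul_self_nonneg _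
      rcases hnn.lt_or_eq with h | h
      · exact h
      · exact absurd (dotProduct_self_eq_zero.mp h.symm) hvne
    set x : E := WithLp.toLp 2 v with hxdef
    have hxne : x ≠ 0 := fun h => hvne (congrArg WithLp.ofLp h)
    have hy : ‖x‖⁻¹ • x ∈ K := by
      constructor
      · simp [norm_smul, inv_mul_cancel₀ (norm_ne_zero_iff.mpr hxne)]
      · show (∑ i, (‖x‖⁻¹ • x) i) = 0
        have h' : ∀ i, (‖x‖⁻¹ • x) i = ‖x‖⁻¹ * x i := fun i => rfl
        simp only [h', ← Finset.mul_sum]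
        rw [show (∑ i, x i) = 0 from hv, mul_zero]
    have hle : f v₀ ≤ f (‖x‖⁻¹ • x) := hmin hy
    have hcalc : f (‖x‖⁻¹ • x) = ‖x‖⁻¹ ^ 2 * f x := by
      show ((‖x‖⁻¹ • x : E) : Fin n → ℝ) ⬝ᵥ (M *ᵥ (‖x‖⁻¹ • x : E)) = _
      have : ((‖x‖⁻¹ • x : E) : Fin n → ℝ) = ‖x‖⁻¹ • (x : Fin n → ℝ) := rfl
      rw [this, mulVec_smul, smul_dotProduct, dotProduct_smul, smul_eq_mul, smul_eq_mul]
      ring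
    have hnx : (0:ℝ) < ‖x‖ := norm_pos_iff.mpr hxne
    have h1 : ‖x‖⁻¹ ^ 2 * ((x : Fin n → ℝ) ⬝ᵥ x) = 1 := by
      rw [aux_dot_self_eq_norm_sq]; field_simp
    show f v₀ * ((x : Fin n → ℝ) ⬝ᵥ x) ≤ f x
    have h2 : f v₀ * ((x : Fin n → ℝ) ⬝ᵥ x) ≤ (‖x‖⁻¹ ^ 2 * f x) * ((x : Fin n → ℝ) ⬝ᵥ x) :=
      mul_le_mul_of_nonneg_right (hle.trans_eq hcalc) hx.le
    have h3 : (‖x‖⁻¹ ^ 2 * f x) * ((x : Fin n → ℝ) ⬝ᵥ x) = f x := by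
      rw [mul_comm (‖x‖⁻¹ ^ 2) (f x), mul_assoc, h1, mul_one]
    linarith

/-- Sorted eigenvalues of index ≥ 1 inherit a quadratic-form lower bound on 𝟙^⊥. -/
lemma aux_sortedEigenvalues_lb {n : ℕ} {A : Matrix (Fin n) (Fin n) ℝ} (hA : A.IsHermitian)
    {c : ℝ} (h : ∀ v : Fin n → ℝ, (∑ i, v i) = 0 → c * (v ⬝ᵥ v) ≤ v ⬝ᵥ (A *ᵥ v)) :
    ∀ i : Fin n, 1 ≤ (i : ℕ) → c ≤ sortedEigenvalues A i := by
  intro i hi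
  rw [sortedEigenvalues, dif_pos hA]
  by_contra hlt
  push_neg at hlt
  have hn0 : 0 < n := i.pos
  set z : Fin n := ⟨0, hn0⟩ with hz
  have hmono := Tuple.monotone_sort hA.eigenvalues
  have h0 : (hA.eigenvalues ∘ Tuple.sort hA.eigenvalues) z ≤
      (hA.eigenvalues ∘ Tuple.sort hA.eigenvalues) i := hmono (by simp [hz, Fin.le_def])
  set j : Fin n := Tuple.sort hA.eigenvalues z with hj
  set k : Fin n := Tuple.sort hA.eigenvalues i with hk
  have hjk : j ≠ k := by
    intro hEq
    have : z = i := (Tuple.sort hA.eigenvalues).injective hEq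
    rw [hz] at this
    have := congrArg Fin.val this
    simp at this
    omega
  have hlj : hA.eigenvalues j < c := lt_of_le_of_lt h0 hlt
  have hlk : hA.eigenvalues k < c := hlt
  set u : Fin n → ℝ := ⇑(hA.eigenvectorBasis j) with hu
  set w : Fin n → ℝ := ⇑(hA.eigenvectorBasis k) with hwdef
  have huu : u ⬝ᵥ u = 1 := by
    have hn1 := hA.eigenvectorBasis.orthonormal.1 j
    have h2 : (inner ℝ (hA.eigenvectorBasis j) (hA.eigenvectorBasis j) : ℝ) = u ⬝ᵥ u := by
      simp only [hu, PiLp.inner_apply, RCLike.inner_apply, conj_trivial, dotProduct, mul_comm]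
    rw [← h2, real_inner_self_eq_norm_sq, hn1]; norm_num
  have hww : w ⬝ᵥ w = 1 := by
    have hn1 := hA.eigenvectorBasis.orthonormal.1 k
    have h2 : (inner ℝ (hA.eigenvectorBasis k) (hA.eigenvectorBasis k) : ℝ) = w ⬝ᵥ w := by
      simp only [hwdef, PiLp.inner_apply, RCLike.inner_apply, conj_trivial, dotProduct, mul_comm]
    rw [← h2, real_inner_self_eq_norm_sq, hn1]; norm_num
  have huw : u ⬝ᵥ w = 0 := by
    have h2 := hA.eigenvectorBasis.orthonormal.2 hjk
    simpa [hu, hwdef, PiLp.inner_apply, dotProduct, RCLike.inner_apply, mul_comm] using h2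
  have hwu : w ⬝ᵥ u = 0 := by rw [dotProduct_comm]; exact huw
  have hAu : A *ᵥ u = hA.eigenvalues j • u := hA.mulVec_eigenvectorBasis j
  have hAw : A *ᵥ w = hA.eigenvalues k • w := hA.mulVec_eigenvectorBasis k
  -- choose coefficients a, b with a•u + b•w ⊥ 𝟙, (a,b) ≠ 0
  obtain ⟨a, b, hab, hsum⟩ : ∃ a b : ℝ, (a ≠ 0 ∨ b ≠ 0) ∧
      a * (∑ i', u i') + b * (∑ i', w i') = 0 := by
    by_cases hc : (∑ i', u i') = 0 ∧ (∑ i', w i') = 0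
    · exact ⟨1, 0, Or.inl one_ne_zero, by rw [hc.1, hc.2]; ring⟩
    · refine ⟨∑ i', w i', -(∑ i', u i'), ?_, by ring⟩
      by_contra hcon
      push_neg at hcon
      exact hc ⟨by simpa using hcon.2, hcon.1⟩
  set v : Fin n → ℝ := a • u + b • w with hv
  have hvs : (∑ i', v i') = 0 := by
    simp only [hv, Pi.add_apply, Pi.smul_apply, smul_eq_mul, Finset.sum_add_distrib,
      ← Finset.mul_sum]
    exact hsum
  have hvv : v ⬝ᵥ v = a ^ 2 + b ^ 2 := by
    simp only [hv, add_dotProduct, dotProduct_add, smul_dotProduct, dotProduct_smul,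
      smul_eq_mul, huu, hww, huw, hwu]
    ring
  have hvAv : v ⬝ᵥ (A *ᵥ v) = a ^ 2 * hA.eigenvalues j + b ^ 2 * hA.eigenvalues k := by
    have : A *ᵥ v = a • (hA.eigenvalues j • u) + b • (hA.eigenvalues k • w) := by
      rw [hv, mulVec_add, mulVec_smul, mulVec_smul, hAu, hAw]
    rw [this]
    simp only [hv, add_dotProduct, dotProduct_add, smul_dotProduct, dotProduct_smul,
      smul_eq_mul, huu, hww, huw, hwu]
    ring
  have hb := h v hvs
  rw [hvv, hvAv] at hb
  have hfalse : a ^ 2 * hA.eigenvalues j + b ^ 2 * hA.eigenvalues k < c * (a ^ 2 + b ^ 2) := by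
    rcases hab with ha | hbne
    · have h1 : a ^ 2 * hA.eigenvalues j < a ^ 2 * c :=
        mul_lt_mul_of_pos_left hlj (by positivity)
      have h2 : b ^ 2 * hA.eigenvalues k ≤ b ^ 2 * c :=
        mul_le_mul_of_nonneg_left hlk.le (sq_nonneg b)
      nlinarith
    · have h1 : b ^ 2 * hA.eigenvalues k < b ^ 2 * c :=
        mul_lt_mul_of_pos_left hlk (by positivity)
      have h2 : a ^ 2 * hA.eigenvalues j ≤ a ^ 2 * c :=
        mul_le_mul_of_nonneg_left hlj.le (sq_nonneg a)
      nlinarith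
  linarith

lemma aux_phi_nonneg {φ : ℝ → ℝ} (hanti : AntitoneOn φ (Set.Ioi 0))
    (hlim : Tendsto φ atTop (nhds 0)) : ∀ x ∈ Set.Ioi (0:ℝ), 0 ≤ φ x := by
  intro x hx
  refine le_of_tendsto hlim ?_
  filter_upwards [eventually_ge_atTop (max x 1)] with y hy
  exact hanti hx (lt_of_lt_of_le (lt_of_lt_of_le one_pos (le_max_right x 1)) hy)
    (le_trans (le_max_left x 1) hy)

/-- Adding a spanning-tree Laplacian with weight `κ → ∞` drives the systemic performance
measure Σ_{i=2}^n φ(λ_i) to `0`. -/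
theorem tendsto_performance_add_spanning_tree {n : ℕ}
    (L LT : Matrix (Fin n) (Fin n) ℝ)
    (hL : IsConnLaplacian L) (hLT : IsConnLaplacian LT)
    (φ : ℝ → ℝ) (hcont : ContinuousOn φ (Set.Ioi 0))
    (hanti : AntitoneOn φ (Set.Ioi 0)) (hconv : ConvexOn ℝ (Set.Ioi 0) φ)
    (hlim : Tendsto φ atTop (nhds 0)) :
    Tendsto (fun κ : ℝ =>
        ∑ i ∈ Finset.univ.filter (fun i : Fin n => 1 ≤ (i : ℕ)),
          φ (sortedEigenvalues (L + κ • LT) i)) atTop (nhds 0) := by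
  by_cases hn : n < 2
  · have hempty : (Finset.univ.filter (fun i : Fin n => 1 ≤ (i : ℕ))) = ∅ := by
      apply Finset.filter_false_of_mem
      intro i _
      have := i.isLt
      omega
    simp only [hempty, Finset.sum_empty]
    exact tendsto_const_nhds
  push_neg at hn
  obtain ⟨μ, hμ, hq⟩ := aux_exists_quadratic_lb hn hLT
  have hφ0 := aux_phi_nonneg hanti hlim
  have key : ∀ κ : ℝ, 0 < κ → ∀ i : Fin n, 1 ≤ (i : ℕ) →
      κ * μ ≤ sortedEigenvalues (L + κ • LT) i := by
    intro κ hκ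
    have hA : (L + κ • LT).IsHermitian := by
      have h1 : L.IsHermitian := hL.1.1
      have h2 : LT.IsHermitian := hLT.1.1
      unfold Matrix.IsHermitian at *
      rw [conjTranspose_add, conjTranspose_smul, h1, h2]
      simp
    apply aux_sortedEigenvalues_lb hA
    intro v hv
    have h1 : (0:ℝ) ≤ v ⬝ᵥ (L *ᵥ v) := by simpa using hL.1.dotProduct_mulVec_nonneg v
    have h2 : μ * (v ⬝ᵥ v) ≤ v ⬝ᵥ (LT *ᵥ v) := hq v hv
    have h3 : v ⬝ᵥ ((L + κ • LT) *ᵥ v) = v ⬝ᵥ (L *ᵥ v) + κ * (v ⬝ᵥ (LT *ᵥ v)) := by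
      rw [add_mulVec, dotProduct_add, smul_mulVec, dotProduct_smul, smul_eq_mul]
    rw [h3]
    nlinarith [mul_le_mul_of_nonneg_left h2 hκ.le]
  apply squeeze_zero' (g := fun κ => (n : ℝ) * φ (κ * μ))
  · filter_upwards [eventually_gt_atTop (0:ℝ)] with κ hκ
    apply Finset.sum_nonneg
    intro i hi
    rw [Finset.mem_filter] at hi
    have hlb := key κ hκ i hi.2
    exact hφ0 _ (lt_of_lt_of_le (by positivity) hlb)
  · filter_upwards [eventually_gt_atTop (0:ℝ)] with κ hκ
    have hκμ : (0:ℝ) < κ * μ := by positivity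
    calc ∑ i ∈ Finset.univ.filter (fun i : Fin n => 1 ≤ (i : ℕ)),
          φ (sortedEigenvalues (L + κ • LT) i)
        ≤ ∑ _i ∈ Finset.univ.filter (fun i : Fin n => 1 ≤ (i : ℕ)), φ (κ * μ) := by
          apply Finset.sum_le_sum
          intro i hi
          rw [Finset.mem_filter] at hi
          have hlb := key κ hκ i hi.2
          exact hanti hκμ (lt_of_lt_of_le hκμ hlb) hlb
      _ ≤ (n : ℝ) * φ (κ * μ) := by
          rw [Finset.sum_const, nsmul_eq_mul]
          apply mul_le_mul_of_nonneg_right _ (hφ0 _ hκμ)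
          have := Finset.card_filter_le (Finset.univ : Finset (Fin n))
            (fun i : Fin n => 1 ≤ (i : ℕ))
          calc ((Finset.univ.filter (fun i : Fin n => 1 ≤ (i : ℕ))).card : ℝ)
              ≤ (Finset.univ : Finset (Fin n)).card := by exact_mod_cast this
            _ = n := by simp
  · have h1 : Tendsto (fun κ : ℝ => κ * μ) atTop atTop :=
      Tendsto.atTop_mul_const hμ tendsto_id
    have := (hlim.comp h1).const_mul (n : ℝ)
    simpa using this
end

section
/- Let L be the Laplacian of a connected weighted graph on n nodes, let e = {i,j} be a pair of distinct indices, and let w > 0. Then L + wL_e is again the Laplacian of a connected weighted graph, and its Moore–Penrose pseudoinverse satisfies the rank-one update formula (L + wL_e)^† = L^† − (1/(w⁻¹ + r_e(L))) U_e, where U_e = (L^† (δ_i − δ_j)) (L^† (δ_i − δ_j))ᵀ. -/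
open Filter Finset Matrix

/-- The all-ones `n × n` matrix `J`. -/
def Jmat (n : ℕ) : Matrix (Fin n) (Fin n) ℝ := Matrix.of fun _ _ => (1 : ℝ)

/-- Moore–Penrose pseudoinverse of a connected-graph Laplacian:
`L^† = (L + (1/n) J)⁻¹ − (1/n) J`. -/
noncomputable def lapPinv {n : ℕ} (L : Matrix (Fin n) (Fin n) ℝ) : Matrix (Fin n) (Fin n) ℝ :=
  (L + (1 / (n : ℝ)) • Jmat n)⁻¹ - (1 / (n : ℝ)) • Jmat n

/-- The single-edge Laplacian `L_e = (δ_i − δ_j)(δ_i − δ_j)ᵀ`. -/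
def edgeLap {n : ℕ} (i j : Fin n) : Matrix (Fin n) (Fin n) ℝ :=
  Matrix.vecMulVec (Pi.single i 1 - Pi.single j 1) (Pi.single i 1 - Pi.single j 1)

/-- Effective resistance `r_e(L^m)` between nodes `i` and `j`, computed from `L^{†,m}`. -/
noncomputable def reff {n : ℕ} (L : Matrix (Fin n) (Fin n) ℝ) (m : ℕ) (i j : Fin n) : ℝ :=
  (lapPinv L ^ m) i i + (lapPinv L ^ m) j j - 2 * (lapPinv L ^ m) i j

section AuxLemmas
variable {n : ℕ}

lemma myMul_vecMulVec (A : Matrix (Fin n) (Fin n) ℝ) (x y : Fin n → ℝ) :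
    A * vecMulVec x y = vecMulVec (A *ᵥ x) y := by
  ext k l
  simp [mul_apply, vecMulVec_apply, mulVec, dotProduct, Finset.sum_mul, mul_assoc]

lemma myVecMulVec_mul (A : Matrix (Fin n) (Fin n) ℝ) (x y : Fin n → ℝ) :
    vecMulVec x y * A = vecMulVec x (y ᵥ* A) := by
  ext k l
  simp [mul_apply, vecMulVec_apply, vecMul, dotProduct, Finset.mul_sum, mul_assoc, mul_comm,
    mul_left_comm]

lemma myVecMulVec_mulVec (x y v : Fin n → ℝ) :
    vecMulVec x y *ᵥ v = (y ⬝ᵥ v) • x := by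
  ext k
  simp [vecMulVec_apply, mulVec, dotProduct, Finset.mul_sum, mul_comm, mul_left_comm]

lemma myVecMul_vecMulVec (x y v : Fin n → ℝ) :
    v ᵥ* vecMulVec x y = (v ⬝ᵥ x) • y := by
  ext l
  simp [vecMulVec_apply, vecMul, dotProduct, Finset.sum_mul, mul_assoc]

lemma myVecMulVec_smul {n : ℕ} (x y : Fin n → ℝ) (a : ℝ) :
    vecMulVec x (a • y) = a • vecMulVec x y := by
  ext k l
  simp [vecMulVec_apply, mul_comm, mul_left_comm]

lemma mySherman {n : ℕ} (M P : Matrix (Fin n) (Fin n) ℝ) (u : Fin n → ℝ) (w t r : ℝ)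
    (hMM : M * P = 1) (huP : u ᵥ* P = P *ᵥ u) (hr : u ⬝ᵥ (P *ᵥ u) = r)
    (ht : t * (1 + w * r) = w) :
    (M + w • vecMulVec u u) * (P - t • vecMulVec (P *ᵥ u) (P *ᵥ u)) = 1 := by
  have e1 : vecMulVec u u * P = vecMulVec u (P *ᵥ u) := by rw [myVecMulVec_mul, huP]
  have e2 : M * vecMulVec (P *ᵥ u) (P *ᵥ u) = vecMulVec u (P *ᵥ u) := by
    rw [myMul_vecMulVec, mulVec_mulVec, hMM, one_mulVec]
  have e3 : vecMulVec u u * vecMulVec (P *ᵥ u) (P *ᵥ u) = r • vecMulVec u (P *ᵥ u) := by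
    rw [myVecMulVec_mul, myVecMul_vecMulVec, myVecMulVec_smul, hr]
  simp only [add_mul, mul_sub, Matrix.smul_mul, Matrix.mul_smul, e1, e2, e3, hMM, smul_smul]
  rw [← add_smul]
  have hc2 : t + t * (w * r) = w := by linear_combination ht
  rw [hc2]
  abel

lemma myHerm_iff (A : Matrix (Fin n) (Fin n) ℝ) : A.IsHermitian ↔ Aᵀ = A := by
  have h : Aᴴ = Aᵀ := by ext k l; simp [conjTranspose_apply]
  unfold Matrix.IsHermitian
  rw [h]

end AuxLemmas

/-- Rank-one update of the Moore–Penrose pseudoinverse of a connected-graph Laplacian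
under addition of a weighted edge. -/
theorem lapPinv_rank_one_update {n : ℕ}
    (L : Matrix (Fin n) (Fin n) ℝ) (hL : IsConnLaplacian L)
    (i j : Fin n) (hij : i ≠ j) (w : ℝ) (hw : 0 < w) :
    IsConnLaplacian (L + w • edgeLap i j) ∧
      lapPinv (L + w • edgeLap i j) =
        lapPinv L - (1 / (w⁻¹ + reff L 1 i j)) •
          Matrix.vecMulVec (lapPinv L *ᵥ (Pi.single i 1 - Pi.single j 1))
            (lapPinv L *ᵥ (Pi.single i 1 - Pi.single j 1)) := by
  obtain ⟨hPSD, h1, hker⟩ := hL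
  set u : Fin n → ℝ := Pi.single i 1 - Pi.single j 1 with hu
  have hn : 0 < n := i.pos
  have hnR : (0 : ℝ) < n := by exact_mod_cast hn
  set c : ℝ := 1 / (n : ℝ) with hc
  have hcpos : 0 < c := by positivity
  have ones : (Fin n → ℝ) := fun _ => 1
  have hJ : Jmat n = vecMulVec (fun _ => (1 : ℝ)) (fun _ => (1 : ℝ)) := by
    ext k l; simp [Jmat, vecMulVec_apply]
  have hone_u : (fun _ => (1 : ℝ)) ⬝ᵥ u = 0 := by
    simp [hu, dotProduct_sub]
  have hu_one : u ⬝ᵥ (fun _ => (1 : ℝ)) = 0 := by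
    simp [hu, sub_dotProduct]
  have hJu : Jmat n *ᵥ u = 0 := by
    rw [hJ, myVecMulVec_mulVec, hone_u, zero_smul]
  have hu_ne : u ≠ 0 := by
    intro h
    have := congrFun h i
    simp [hu, Pi.single_apply, hij.symm, hij] at this
  -- L symmetric
  have hLsym : Lᵀ = L := (myHerm_iff L).mp hPSD.1
  set M : Matrix (Fin n) (Fin n) ℝ := L + c • Jmat n with hM
  have hJsym : (Jmat n)ᵀ = Jmat n := by ext k l; simp [Jmat]
  have hMsym : Mᵀ = M := by
    rw [hM, transpose_add, transpose_smul, hLsym, hJsym]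
  -- M is positive definite
  have hMpd : M.PosDef := by
    refine posDef_iff_dotProduct_mulVec.mpr ⟨(myHerm_iff M).mpr hMsym, fun x hx => ?_⟩
    rw [star_trivial]
    have hMx : x ⬝ᵥ (M *ᵥ x) = x ⬝ᵥ (L *ᵥ x) + c * (((fun _ => (1:ℝ)) ⬝ᵥ x) * ((fun _ => (1:ℝ)) ⬝ᵥ x)) := by
      rw [hM, add_mulVec, dotProduct_add, smul_mulVec, hJ, myVecMulVec_mulVec]
      simp only [dotProduct_smul, smul_eq_mul]
      rw [dotProduct_comm x (fun _ => (1:ℝ))]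
      try ring
    rw [hMx]
    have h1x : 0 ≤ x ⬝ᵥ (L *ᵥ x) := by simpa using hPSD.dotProduct_mulVec_nonneg x
    rcases h1x.lt_or_eq with hlt | heq
    · have : 0 ≤ c * (((fun _ => (1:ℝ)) ⬝ᵥ x) * ((fun _ => (1:ℝ)) ⬝ᵥ x)) := by
        have := mul_self_nonneg ((fun _ => (1:ℝ)) ⬝ᵥ x)
        positivity
      linarith
    · -- x ⬝ᵥ L x = 0 forces x constant, then the J-part is positive
      have hLx : L *ᵥ x = 0 := by
        have := (hPSD.dotProduct_mulVec_zero_iff x).mp (by rw [star_trivial]; exact heq.symm)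
        exact this
      obtain ⟨k, hk⟩ := hker x hLx
      have hkne : k ≠ 0 := by
        intro h; apply hx; rw [hk, h]; ext; simp
      have hsum : (fun _ => (1:ℝ)) ⬝ᵥ x = n * k := by
        rw [hk]; simp [dotProduct, mul_comm]
      rw [← heq, hsum]
      have hnk : (n : ℝ) * k ≠ 0 := mul_ne_zero hnR.ne' hkne
      have : 0 < c * (↑n * k * (↑n * k)) := mul_pos hcpos (mul_self_pos.mpr hnk)
      linarith
  have hMdet : IsUnit M.det := isUnit_iff_ne_zero.mpr hMpd.det_pos.ne'
  have hMM : M * M⁻¹ = 1 := mul_nonsing_inv M hMdet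
  have hM'M : M⁻¹ * M = 1 := nonsing_inv_mul M hMdet
  set P := M⁻¹ with hP
  have hPsym : Pᵀ = P := by rw [hP, transpose_nonsing_inv, hMsym]
  have hM1 : M *ᵥ (fun _ => (1:ℝ)) = (fun _ => (1:ℝ)) := by
    rw [hM, add_mulVec, h1, smul_mulVec, hJ, myVecMulVec_mulVec]
    ext k
    simp [dotProduct, hc]
    field_simp
  have hP1 : P *ᵥ (fun _ => (1:ℝ)) = (fun _ => (1:ℝ)) := by
    conv_lhs => rw [← hM1]
    rw [mulVec_mulVec, hM'M, one_mulVec]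
  have hlap : lapPinv L = P - c • Jmat n := by
    rw [hP, hM, hc]
    rfl
  have hPu : lapPinv L *ᵥ u = P *ᵥ u := by
    rw [hlap, sub_mulVec, smul_mulVec, hJu, smul_zero, sub_zero]
  have hQsym : (lapPinv L)ᵀ = lapPinv L := by
    rw [hlap, transpose_sub, transpose_smul, hPsym, hJsym]
  set r := reff L 1 i j with hrdef
  have hQu : lapPinv L *ᵥ u = fun k => lapPinv L k i - lapPinv L k j := by
    ext k
    simp [hu, mulVec_sub, mulVec_single]
  have hQij : lapPinv L i j = lapPinv L j i := by
    conv_lhs => rw [← hQsym]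
    rw [transpose_apply]
  have hr : r = u ⬝ᵥ (P *ᵥ u) := by
    rw [← hPu, hQu, hrdef, reff, pow_one]
    simp only [hu, sub_dotProduct, single_dotProduct, one_mul]
    rw [hQij]
    ring
  have hrpos : 0 < r := by
    rw [hr]
    have := hMpd.inv.dotProduct_mulVec_pos hu_ne
    rw [star_trivial] at this
    exact this
  have hden : 0 < w⁻¹ + r := add_pos (inv_pos.mpr hw) hrpos
  set t := 1 / (w⁻¹ + r) with htdef
  have ht : t * (1 + w * r) = w := by
    have hwr : w * (w⁻¹ + r) = 1 + w * r := by
      field_simp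
    rw [htdef, ← hwr, one_div]
    rw [mul_comm w (w⁻¹ + r), ← mul_assoc, inv_mul_cancel₀ hden.ne', one_mul]
  have huP : u ᵥ* P = P *ᵥ u := by
    conv_rhs => rw [← hPsym]
    rw [mulVec_transpose]
  have key := mySherman M P u w t r hMM huP hr.symm ht
  have hNinv : (M + w • vecMulVec u u)⁻¹ = P - t • vecMulVec (P *ᵥ u) (P *ᵥ u) :=
    inv_eq_right_inv key
  have hEdge : edgeLap i j = vecMulVec u u := by rw [edgeLap, ← hu]
  have hshift : L + w • edgeLap i j + c • Jmat n = M + w • vecMulVec u u := by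
    rw [hEdge, hM]; abel
  have hlap2 : lapPinv (L + w • edgeLap i j) =
      (L + w • edgeLap i j + c • Jmat n)⁻¹ - c • Jmat n := by
    rw [hc]; rfl
  refine ⟨⟨posSemidef_iff_dotProduct_mulVec.mpr ⟨?_, ?_⟩, ?_, ?_⟩, ?_⟩
  · -- Hermitian
    apply (myHerm_iff _).mpr
    rw [transpose_add, transpose_smul, hLsym, hEdge]
    have hVsym : (vecMulVec u u)ᵀ = vecMulVec u u := by
      ext k l; simp [transpose_apply, vecMulVec_apply, mul_comm]
    rw [hVsym]
  · -- nonnegativity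
    intro x
    rw [star_trivial]
    have hx0 : 0 ≤ x ⬝ᵥ (L *ᵥ x) := by simpa using hPSD.dotProduct_mulVec_nonneg x
    have hterm : x ⬝ᵥ ((w • edgeLap i j) *ᵥ x) = w * ((u ⬝ᵥ x) * (u ⬝ᵥ x)) := by
      rw [smul_mulVec, hEdge, myVecMulVec_mulVec, dotProduct_smul, dotProduct_smul,
        smul_eq_mul, smul_eq_mul, dotProduct_comm x u]
      try ring
    rw [add_mulVec, dotProduct_add, hterm]
    nlinarith [mul_self_nonneg (u ⬝ᵥ x)]
  · -- ones in kernel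
    rw [add_mulVec, h1, smul_mulVec, hEdge, myVecMulVec_mulVec, hu_one, zero_smul,
      smul_zero, zero_add]
  · -- kernel is spanned by ones
    intro v hv
    have hterm : v ⬝ᵥ ((w • edgeLap i j) *ᵥ v) = w * ((u ⬝ᵥ v) * (u ⬝ᵥ v)) := by
      rw [smul_mulVec, hEdge, myVecMulVec_mulVec, dotProduct_smul, dotProduct_smul,
        smul_eq_mul, smul_eq_mul, dotProduct_comm v u]
      try ring
    have hvv : v ⬝ᵥ (L *ᵥ v) + w * ((u ⬝ᵥ v) * (u ⬝ᵥ v)) = 0 := by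
      have h0 : v ⬝ᵥ ((L + w • edgeLap i j) *ᵥ v) = 0 := by rw [hv, dotProduct_zero]
      rw [add_mulVec, dotProduct_add, hterm] at h0
      exact h0
    have hx0 : 0 ≤ v ⬝ᵥ (L *ᵥ v) := by simpa using hPSD.dotProduct_mulVec_nonneg v
    have h2 : 0 ≤ w * ((u ⬝ᵥ v) * (u ⬝ᵥ v)) := mul_nonneg hw.le (mul_self_nonneg _)
    have hLv0 : v ⬝ᵥ (L *ᵥ v) = 0 := by linarith
    have hLv : L *ᵥ v = 0 :=
      (hPSD.dotProduct_mulVec_zero_iff v).mp (by rw [star_trivial]; exact hLv0)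
    exact hker v hLv
  · -- the pseudoinverse formula
    rw [hlap2, hshift, hNinv, hPu, hlap]
    abel
end

section
/- Let L be the Laplacian of a connected weighted graph on n nodes, let e = {i,j} be a pair of distinct indices, and let w > 0. Then the spectral zeta function ζ₁ satisfies ζ₁(L + wL_e) = ζ₁(L) − r_e(L²)/(w⁻¹ + r_e(L)), where ζ₁(L) = tr(L^†) = Σ_{i=2}^n λ_i⁻¹. -/
open Filter Finset Matrix

lemma dot_mulVec_aux' {n : ℕ} (A : Matrix (Fin n) (Fin n) ℝ) (i j : Fin n) :
    (Pi.single i 1 - Pi.single j 1) ⬝ᵥ A *ᵥ (Pi.single i 1 - Pi.single j 1)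
      = A i i + A j j - A i j - A j i := by
  simp [sub_dotProduct, single_dotProduct, mulVec_sub, mulVec_single]
  ring

lemma mul_vecMulVec' {n : ℕ} (A : Matrix (Fin n) (Fin n) ℝ) (u v : Fin n → ℝ) :
    A * vecMulVec u v = vecMulVec (A *ᵥ u) v := by
  ext a b
  simp [mul_apply, vecMulVec_apply, mulVec, dotProduct, Finset.sum_mul, mul_assoc]

lemma vecMulVec_mul' {n : ℕ} (A : Matrix (Fin n) (Fin n) ℝ) (u v : Fin n → ℝ) :
    vecMulVec u v * A = vecMulVec u (v ᵥ* A) := by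
  ext a b
  simp [mul_apply, vecMulVec_apply, vecMul, dotProduct, Finset.mul_sum, mul_assoc]

lemma trace_vecMulVec' {n : ℕ} (u v : Fin n → ℝ) : (vecMulVec u v).trace = u ⬝ᵥ v := by
  simp [Matrix.trace, vecMulVec_apply, dotProduct, Matrix.diag]

lemma vecMulVec_mul_vecMulVec' {n : ℕ} (a b c d : Fin n → ℝ) :
    vecMulVec a b * vecMulVec c d = (b ⬝ᵥ c) • vecMulVec a d := by
  ext x y
  simp only [mul_apply, vecMulVec_apply, Matrix.smul_apply, smul_eq_mul, dotProduct,
    Finset.sum_mul]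
  exact Finset.sum_congr rfl fun k _ => by ring

/-- Exact update of the spectral zeta function ζ₁(L) = tr(L^†) under addition of a
weighted edge, together with its spectral expression. -/
theorem zeta_one_rank_one_update {n : ℕ}
    (L : Matrix (Fin n) (Fin n) ℝ) (hL : IsConnLaplacian L)
    (i j : Fin n) (hij : i ≠ j) (w : ℝ) (hw : 0 < w) :
    (lapPinv L).trace =
        ∑ l ∈ Finset.univ.filter (fun l : Fin n => 1 ≤ (l : ℕ)),
          (sortedEigenvalues L l)⁻¹ ∧
      (lapPinv (L + w • edgeLap i j)).trace =
        (lapPinv L).trace - reff L 2 i j / (w⁻¹ + reff L 1 i j) := by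
  obtain ⟨hpsd, h1, hker⟩ := hL
  have hn : 0 < n := i.pos
  have hA : L.IsHermitian := hpsd.1
  have hnR : (n:ℝ) ≠ 0 := Nat.cast_ne_zero.mpr hn.ne'
  set lam : Fin n → ℝ := hA.eigenvalues with hlam
  set b : Fin n → Fin n → ℝ := fun l => ⇑(hA.eigenvectorBasis l) with hb
  have hLb : ∀ l, L *ᵥ b l = lam l • b l := fun l => hA.mulVec_eigenvectorBasis l
  have horth : ∀ l m, (∑ k, b l k * b m k) = if l = m then 1 else 0 := by
    intro l m
    have := orthonormal_iff_ite.mp hA.eigenvectorBasis.orthonormal l m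
    simp [PiLp.inner_apply, RCLike.inner_apply, conj_trivial] at this
    rw [← this]
    exact Finset.sum_congr rfl fun k _ => mul_comm _ _
  have hnonneg : ∀ l, 0 ≤ lam l := hpsd.eigenvalues_nonneg
  -- existence of zero eigenvalue
  have hdet : L.det = 0 := by
    rw [← Matrix.exists_mulVec_eq_zero_iff]
    refine ⟨fun _ => 1, ?_, h1⟩
    intro h
    simpa using congrFun h ⟨0, hn⟩
  have hex : ∃ l0, lam l0 = 0 := by
    have := hA.det_eq_prod_eigenvalues
    rw [hdet] at this
    obtain ⟨l0, _, h⟩ := Finset.prod_eq_zero_iff.mp this.symm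
    exact ⟨l0, h⟩
  have hconst : ∀ l, lam l = 0 → ∃ c0 : ℝ, c0 ≠ 0 ∧ b l = fun _ => c0 := by
    intro l hl
    have h0 : L *ᵥ b l = 0 := by rw [hLb l, hl, zero_smul]
    obtain ⟨c0, hc0⟩ := hker _ h0
    refine ⟨c0, ?_, hc0⟩
    intro hc
    have := horth l l
    rw [hc0, hc] at this
    simpa using this
  have huniq : ∀ l m, lam l = 0 → lam m = 0 → l = m := by
    intro l m hl hm
    by_contra hlm
    obtain ⟨c0, hc0, hbl⟩ := hconst l hl
    obtain ⟨c1, hc1, hbm⟩ := hconst m hm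
    have := horth l m
    rw [hbl, hbm, if_neg hlm] at this
    simp only [Finset.sum_const, card_univ, Fintype.card_fin, nsmul_eq_mul] at this
    exact hc0 (by rcases mul_eq_zero.mp ((mul_eq_zero.mp this).resolve_left hnR) with h | h
                  · exact h
                  · exact absurd h hc1)
  have hsum0 : ∀ l, lam l ≠ 0 → (∑ k, b l k) = 0 := by
    intro l hl
    obtain ⟨l0, hl0⟩ := hex
    obtain ⟨c0, hc0, hbl0⟩ := hconst l0 hl0
    have hne : l0 ≠ l := fun h => hl (h ▸ hl0)
    have := horth l0 l
    rw [hbl0, if_neg hne] at this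
    simp only [← Finset.mul_sum] at this
    exact (mul_eq_zero.mp this).resolve_left hc0
  -- M and its diagonalization
  set M : Matrix (Fin n) (Fin n) ℝ := L + (1/(n:ℝ)) • Jmat n with hMdef
  have hJmul : ∀ x : Fin n → ℝ, Jmat n *ᵥ x = (∑ k, x k) • (fun _ => (1:ℝ)) := by
    intro x; ext a; simp [Jmat, mulVec, dotProduct]
  set mu : Fin n → ℝ := fun l => if lam l = 0 then 1 else lam l with hmu
  have hmupos : ∀ l, 0 < mu l := by
    intro l
    by_cases h : lam l = 0 <;> simp [hmu, h]
    exact lt_of_le_of_ne (hnonneg l) (Ne.symm h)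
  have hMb : ∀ l, M *ᵥ b l = mu l • b l := by
    intro l
    rw [hMdef, add_mulVec, smul_mulVec, hJmul, hLb]
    by_cases h : lam l = 0
    · obtain ⟨c0, hc0, hbl⟩ := hconst l h
      rw [h, hbl]
      simp only [hmu, if_pos h, one_smul, zero_smul, zero_add, Finset.sum_const, card_univ,
        Fintype.card_fin, nsmul_eq_mul, smul_smul]
      ext a
      simp
      field_simp
    · rw [hsum0 l h, zero_smul, smul_zero, add_zero, hmu]
      simp [h]
  set U : Matrix (Fin n) (Fin n) ℝ := (hA.eigenvectorUnitary : Matrix (Fin n) (Fin n) ℝ) with hU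
  have hUcol : ∀ l, U *ᵥ Pi.single l 1 = b l := fun l => hA.eigenvectorUnitary_mulVec l
  have hUstar : star U * U = 1 := (Matrix.mem_unitaryGroup_iff').mp hA.eigenvectorUnitary.2
  have hUstar' : U * star U = 1 := (Matrix.mem_unitaryGroup_iff).mp hA.eigenvectorUnitary.2
  have hMU : M * U = U * Matrix.diagonal mu := by
    ext a l
    have h1 : (M * U) *ᵥ Pi.single l 1 = mu l • b l := by
      rw [← mulVec_mulVec, hUcol, hMb]
    have h2 : (U * Matrix.diagonal mu) *ᵥ Pi.single l 1 = mu l • b l := by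
      have hsingle : (Pi.single l (mu l) : Fin n → ℝ) = mu l • (Pi.single l 1 : Fin n → ℝ) := by
        ext a; simp [Pi.single_apply]
      rw [← mulVec_mulVec, Matrix.diagonal_mulVec_single, mul_one, hsingle,
        mulVec_smul, hUcol]
    have := congrFun (h1.trans h2.symm) a
    simpa [mulVec_single] using this
  have hMspec : M = U * Matrix.diagonal mu * star U := by
    calc M = M * (U * star U) := by rw [hUstar', mul_one]
    _ = (M * U) * star U := by rw [mul_assoc]
    _ = U * Matrix.diagonal mu * star U := by rw [hMU]
  have hDD : Matrix.diagonal mu * Matrix.diagonal (fun l => (mu l)⁻¹) = 1 := by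
    rw [Matrix.diagonal_mul_diagonal]
    have : (fun l => mu l * (mu l)⁻¹) = fun _ : Fin n => (1:ℝ) := by
      ext l; exact mul_inv_cancel₀ (hmupos l).ne'
    rw [this, Matrix.diagonal_one]
  have hMinv : M⁻¹ = U * Matrix.diagonal (fun l => (mu l)⁻¹) * star U := by
    apply Matrix.inv_eq_right_inv
    rw [hMspec]
    calc (U * Matrix.diagonal mu * star U) * (U * Matrix.diagonal (fun l => (mu l)⁻¹) * star U)
        = U * Matrix.diagonal mu * (star U * U) * Matrix.diagonal (fun l => (mu l)⁻¹) * star U := by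
          simp only [mul_assoc]
      _ = U * (Matrix.diagonal mu * Matrix.diagonal (fun l => (mu l)⁻¹)) * star U := by
          rw [hUstar, mul_one]; simp only [mul_assoc]
      _ = 1 := by rw [hDD, mul_one, hUstar']
  have htrM : M⁻¹.trace = ∑ l, (mu l)⁻¹ := by
    rw [hMinv, Matrix.trace_mul_cycle, hUstar, one_mul, Matrix.trace_diagonal]
  have htrJ : (Jmat n).trace = (n:ℝ) := by
    simp [Jmat, Matrix.trace, Matrix.diag]
  have htrP : (lapPinv L).trace = (∑ l, (mu l)⁻¹) - 1 := by
    rw [lapPinv, ← hMdef, Matrix.trace_sub, Matrix.trace_smul, htrJ, htrM, smul_eq_mul]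
    congr 1
    field_simp
  set sigma := Tuple.sort lam with hsigma
  have hsort : sortedEigenvalues L = lam ∘ sigma := by
    rw [sortedEigenvalues, dif_pos hA]
  have hmono := Tuple.monotone_sort lam
  obtain ⟨l0, hl0⟩ := hex
  have h00 : lam (sigma ⟨0, hn⟩) = 0 := by
    have hle : lam (sigma ⟨0, hn⟩) ≤ lam (sigma (sigma.symm l0)) := by
      have : (⟨0, hn⟩ : Fin n) ≤ sigma.symm l0 := by simp [Fin.le_def]
      exact hmono this
    rw [Equiv.apply_symm_apply, hl0] at hle
    exact le_antisymm hle (hnonneg _)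
  have hne0 : ∀ l : Fin n, l ≠ ⟨0, hn⟩ → lam (sigma l) ≠ 0 := by
    intro l hl h
    exact hl (sigma.injective (huniq _ _ h h00))
  have hfilter : Finset.univ.filter (fun l : Fin n => 1 ≤ (l:ℕ)) = Finset.univ.erase ⟨0, hn⟩ := by
    ext l
    simp [Nat.one_le_iff_ne_zero, Fin.ext_iff]
  have hsum : ∑ l, (mu l)⁻¹
      = 1 + ∑ l ∈ Finset.univ.filter (fun l : Fin n => 1 ≤ (l:ℕ)), (sortedEigenvalues L l)⁻¹ := by
    rw [← Equiv.sum_comp sigma (fun l => (mu l)⁻¹), hfilter,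
      ← Finset.add_sum_erase Finset.univ _ (Finset.mem_univ (⟨0, hn⟩ : Fin n))]
    congr 1
    · simp [hmu, h00]
    · refine Finset.sum_congr rfl fun l hl => ?_
      have hlne := (Finset.mem_erase.mp hl).1
      rw [hsort]
      simp only [Function.comp_apply, hmu, if_neg (hne0 l hlne)]
  have part1 : (lapPinv L).trace
      = ∑ l ∈ Finset.univ.filter (fun l : Fin n => 1 ≤ (l:ℕ)), (sortedEigenvalues L l)⁻¹ := by
    rw [htrP, hsum]; ring
  -- ## Part 2
  have hJsherm : ((1/(n:ℝ)) • Jmat n).IsHermitian := by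
    ext a b; simp [Jmat, conjTranspose_apply]
  have hMherm : M.IsHermitian := hA.add hJsherm
  have hx2 : ∀ x : Fin n → ℝ,
      x ⬝ᵥ ((1/(n:ℝ)) • Jmat n) *ᵥ x = (1/(n:ℝ)) * (∑ k, x k)^2 := by
    intro x
    rw [smul_mulVec, hJmul, dotProduct_smul, dotProduct_smul, smul_eq_mul, smul_eq_mul]
    have hxo : x ⬝ᵥ (fun _ => (1:ℝ)) = ∑ k, x k := by simp [dotProduct]
    rw [hxo]; ring
  have hMq : ∀ x : Fin n → ℝ, x ⬝ᵥ M *ᵥ x = x ⬝ᵥ L *ᵥ x + (1/(n:ℝ)) * (∑ k, x k)^2 := by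
    intro x
    rw [hMdef, add_mulVec, dotProduct_add, hx2]
  have hMpd : M.PosDef := by
    refine Matrix.PosDef.of_dotProduct_mulVec_pos hMherm fun x hx => ?_
    simp only [star_trivial]
    have h1x : (0:ℝ) ≤ x ⬝ᵥ L *ᵥ x := by simpa using hpsd.dotProduct_mulVec_nonneg x
    have h2x : (0:ℝ) ≤ (1/(n:ℝ)) * (∑ k, x k)^2 := by positivity
    rcases lt_or_eq_of_le h1x with hlt | heq
    · rw [hMq x]; linarith
    rcases lt_or_eq_of_le h2x with hlt | heq2
    · rw [hMq x]; linarith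
    exfalso
    have hLx : L *ᵥ x = 0 := by
      rw [← hpsd.dotProduct_mulVec_zero_iff x]
      simpa using heq.symm
    obtain ⟨c0, rfl⟩ := hker x hLx
    have hsx : (∑ k : Fin n, c0) = 0 := by
      have : (1/(n:ℝ)) ≠ 0 := by positivity
      have := heq2.symm
      rw [mul_eq_zero] at this
      rcases this with h | h
      · exact absurd h ‹(1/(n:ℝ)) ≠ 0›
      · exact pow_eq_zero_iff (by norm_num) |>.mp h
    simp only [Finset.sum_const, card_univ, Fintype.card_fin, nsmul_eq_mul] at hsx
    rcases mul_eq_zero.mp hsx with h | h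
    · exact hnR h
    · exact hx (by ext k; simp [h])
  have hMdet : IsUnit M.det := hMpd.det_pos.ne'.isUnit
  have hMM : M * M⁻¹ = 1 := Matrix.mul_nonsing_inv M hMdet
  have hMinvherm : M⁻¹.IsHermitian := hMherm.inv
  set u : Fin n → ℝ := Pi.single i 1 - Pi.single j 1 with huu
  have hune : u ≠ 0 := by
    intro h
    have := congrFun h i
    simp [huu, Pi.single_apply, hij] at this
  have hsumu : ∑ k, u k = 0 := by
    simp [huu, Finset.sum_sub_distrib, Pi.single_apply]
  have hJu : Jmat n *ᵥ u = 0 := by rw [hJmul, hsumu, zero_smul]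
  set r1 : ℝ := u ⬝ᵥ M⁻¹ *ᵥ u with hr1
  have hr1pos : 0 < r1 := by
    have := hMpd.inv.dotProduct_mulVec_pos hune
    simpa using this
  set V : Matrix (Fin n) (Fin n) ℝ := vecMulVec u u with hVdef
  set kk : ℝ := w / (1 + w * r1) with hkk
  have hden : (1 + w * r1) ≠ 0 := by positivity
  have hVMV : V * M⁻¹ * V = r1 • V := by
    rw [hVdef, vecMulVec_mul', vecMulVec_mul_vecMulVec', ← dotProduct_mulVec]
  have hSM : (M + w • V) * (M⁻¹ - kk • (M⁻¹ * V * M⁻¹)) = 1 := by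
    have e1 : M * (kk • (M⁻¹ * V * M⁻¹)) = kk • (V * M⁻¹) := by
      rw [mul_smul_comm]
      congr 1
      calc M * (M⁻¹ * V * M⁻¹) = (M * M⁻¹) * V * M⁻¹ := by simp only [mul_assoc]
        _ = V * M⁻¹ := by rw [hMM, one_mul]
    have eV : V * (M⁻¹ * V * M⁻¹) = r1 • (V * M⁻¹) := by
      calc V * (M⁻¹ * V * M⁻¹) = (V * M⁻¹ * V) * M⁻¹ := by simp only [mul_assoc]
        _ = (r1 • V) * M⁻¹ := by rw [hVMV]
        _ = r1 • (V * M⁻¹) := by rw [smul_mul_assoc]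
    have e3 : (w • V) * (kk • (M⁻¹ * V * M⁻¹)) = (w * (kk * r1)) • (V * M⁻¹) := by
      rw [smul_mul_assoc, mul_smul_comm, smul_smul, eV, smul_smul, mul_assoc]
    rw [add_mul, mul_sub, mul_sub, e1, e3, hMM, smul_mul_assoc]
    have hzero : w • (V * M⁻¹) - kk • (V * M⁻¹) - (w * (kk * r1)) • (V * M⁻¹) = 0 := by
      rw [← sub_smul, ← sub_smul,
        show w - kk - w * (kk * r1) = 0 by rw [hkk]; field_simp; ring, zero_smul]
    have hre : (1 : Matrix (Fin n) (Fin n) ℝ) - kk • (V * M⁻¹)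
        + (w • (V * M⁻¹) - (w * (kk * r1)) • (V * M⁻¹))
        = 1 + (w • (V * M⁻¹) - kk • (V * M⁻¹) - (w * (kk * r1)) • (V * M⁻¹)) := by abel
    rw [hre, hzero, add_zero]
  have hM'inv : (M + w • V)⁻¹ = M⁻¹ - kk • (M⁻¹ * V * M⁻¹) := Matrix.inv_eq_right_inv hSM
  have htrX : (M⁻¹ * V * M⁻¹).trace = u ⬝ᵥ (M⁻¹ * M⁻¹) *ᵥ u := by
    rw [Matrix.trace_mul_cycle, hVdef, mul_vecMulVec', trace_vecMulVec', dotProduct_comm]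
  -- relate to P
  have hPdef : lapPinv L = M⁻¹ - (1/(n:ℝ)) • Jmat n := by rw [lapPinv, ← hMdef]
  have hPu : lapPinv L *ᵥ u = M⁻¹ *ᵥ u := by
    rw [hPdef, sub_mulVec, smul_mulVec, hJu, smul_zero, sub_zero]
  have hJL0 : Jmat n * L = 0 := by
    ext a c
    simp only [Jmat, mul_apply, Matrix.zero_apply, Matrix.of_apply, one_mul]
    have hc := congrFun h1 c
    simp only [mulVec, dotProduct, mul_one, Pi.zero_apply] at hc
    rw [← hc]
    exact Finset.sum_congr rfl fun k _ => by
      have := hA.apply k c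
      simpa using this.symm
  have hJM1 : Jmat n * M = Jmat n := by
    have hJJ : Jmat n * Jmat n = (n:ℝ) • Jmat n := by
      ext a c; simp [Jmat, mul_apply]
    rw [hMdef, mul_add, mul_smul_comm, hJL0, hJJ, smul_smul, zero_add]
    rw [show (1/(n:ℝ)) * n = 1 by field_simp, one_smul]
  have hJMinv : Jmat n * M⁻¹ = Jmat n := by
    calc Jmat n * M⁻¹ = (Jmat n * M) * M⁻¹ := by rw [hJM1]
      _ = Jmat n * (M * M⁻¹) := by rw [mul_assoc]
      _ = Jmat n := by rw [hMM, mul_one]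
  have hJPu : Jmat n *ᵥ (lapPinv L *ᵥ u) = 0 := by
    rw [hPu, mulVec_mulVec, hJMinv, hJu]
  have hM2u : (M⁻¹ * M⁻¹) *ᵥ u = lapPinv L *ᵥ (lapPinv L *ᵥ u) := by
    have hMP : M⁻¹ = lapPinv L + (1/(n:ℝ)) • Jmat n := by rw [hPdef, sub_add_cancel]
    have hJu2 : Jmat n *ᵥ (M⁻¹ *ᵥ u) = 0 := by
      rw [mulVec_mulVec, hJMinv, hJu]
    have hstep : M⁻¹ *ᵥ (M⁻¹ *ᵥ u) = lapPinv L *ᵥ (M⁻¹ *ᵥ u) := by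
      nth_rewrite 1 [hMP]
      rw [add_mulVec, smul_mulVec, hJu2, smul_zero, add_zero]
    rw [← mulVec_mulVec, hstep, ← hPu]
  -- symmetry of lapPinv L
  have hPherm : (lapPinv L).IsHermitian := by
    rw [hPdef]; exact hMinvherm.sub hJsherm
  have hPji : lapPinv L j i = lapPinv L i j := by
    have := hPherm.apply i j
    simpa using this
  have hd1 : u ⬝ᵥ lapPinv L *ᵥ u
      = lapPinv L i i + lapPinv L j j - lapPinv L i j - lapPinv L j i := by
    rw [huu]; exact dot_mulVec_aux' _ i j
  have hreff1 : reff L 1 i j = r1 := by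
    rw [reff, pow_one, hr1, ← hPu, hd1, hPji]
    ring
  have hP2ji : (lapPinv L * lapPinv L) j i = (lapPinv L * lapPinv L) i j := by
    have h2 : (lapPinv L * lapPinv L).IsHermitian := by
      rw [Matrix.IsHermitian, conjTranspose_mul, hPherm.eq]
    have := h2.apply i j
    simpa using this
  have hd2 : u ⬝ᵥ (lapPinv L * lapPinv L) *ᵥ u
      = (lapPinv L * lapPinv L) i i + (lapPinv L * lapPinv L) j j
        - (lapPinv L * lapPinv L) i j - (lapPinv L * lapPinv L) j i := by
    rw [huu]; exact dot_mulVec_aux' _ i j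
  have hreff2 : reff L 2 i j = u ⬝ᵥ (M⁻¹ * M⁻¹) *ᵥ u := by
    have hM2u' : (M⁻¹ * M⁻¹) *ᵥ u = (lapPinv L * lapPinv L) *ᵥ u := by
      rw [hM2u, Matrix.mulVec_mulVec]
    rw [reff, pow_two, hM2u', hd2, hP2ji]
    ring
  -- assemble
  have hedge : w • edgeLap i j = w • V := by simp only [edgeLap, hVdef, huu]
  have hM'eq : (L + w • edgeLap i j) + (1/(n:ℝ)) • Jmat n = M + w • V := by
    rw [hedge, hMdef, add_right_comm]
  have htrP' : (lapPinv (L + w • edgeLap i j)).trace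
      = (lapPinv L).trace - kk * (u ⬝ᵥ (M⁻¹ * M⁻¹) *ᵥ u) := by
    rw [lapPinv, hM'eq, hM'inv, hPdef]
    simp only [Matrix.trace_sub, Matrix.trace_smul, htrX, smul_eq_mul]
    ring
  have part2 : (lapPinv (L + w • edgeLap i j)).trace
      = (lapPinv L).trace - reff L 2 i j / (w⁻¹ + reff L 1 i j) := by
    rw [htrP', hreff2, hreff1]
    congr 1
    rw [hkk]
    have hwr : w⁻¹ + r1 ≠ 0 := by positivity
    field_simp
  exact ⟨part1, part2⟩
end

section
/- Let L be the Laplacian of a connected weighted graph on n nodes and let e = {i,j} be a pair of distinct indices. Then for every weight w > 0, the improvement of the spectral zeta function ζ₁(L) = tr(L^†) obtained by adding the weighted edge w·L_e is bounded by a fundamental limit that is independent of w: ζ₁(L) − ζ₁(L + wL_e) ≤ r_e(L²)/r_e(L). -/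
open Filter Finset Matrix

-- auxiliary lemmas
lemma aux_UAU {n : ℕ} (u : Fin n → ℝ) (A : Matrix (Fin n) (Fin n) ℝ) :
    vecMulVec u u * A * vecMulVec u u = (u ⬝ᵥ A *ᵥ u) • vecMulVec u u := by
  ext a b
  simp only [mul_apply, vecMulVec_apply, Matrix.smul_apply, smul_eq_mul, dotProduct, mulVec,
    Finset.sum_mul, Finset.mul_sum]
  rw [Finset.sum_comm]
  refine Finset.sum_congr rfl fun k _ => Finset.sum_congr rfl fun l _ => by ring

lemma aux_traceUA {n : ℕ} (u : Fin n → ℝ) (A : Matrix (Fin n) (Fin n) ℝ) :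
    (vecMulVec u u * A).trace = u ⬝ᵥ A *ᵥ u := by
  simp only [Matrix.trace, Matrix.diag_apply, mul_apply, vecMulVec_apply, dotProduct, mulVec,
    Finset.mul_sum]
  rw [Finset.sum_comm]
  refine Finset.sum_congr rfl fun k _ => Finset.sum_congr rfl fun l _ => by ring

lemma aux_quad {n : ℕ} (i j : Fin n) (A : Matrix (Fin n) (Fin n) ℝ) :
    (Pi.single i 1 - Pi.single j 1) ⬝ᵥ A *ᵥ (Pi.single i 1 - Pi.single j 1)
      = A i i + A j j - A i j - A j i := by
  simp [mulVec_sub, dotProduct_sub, sub_dotProduct, mulVec_single, single_dotProduct]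
  ring

/-- Fundamental limit on the improvement of ζ₁(L) = tr(L^†) by adding one weighted edge:
the improvement never exceeds `r_e(L²)/r_e(L)`, regardless of the weight. -/
theorem zeta_one_improvement_fundamental_limit {n : ℕ}
    (L : Matrix (Fin n) (Fin n) ℝ) (hL : IsConnLaplacian L)
    (i j : Fin n) (hij : i ≠ j) (w : ℝ) (hw : 0 < w) :
    (lapPinv L).trace - (lapPinv (L + w • edgeLap i j)).trace ≤
      reff L 2 i j / reff L 1 i j := by
  obtain ⟨hpsd, hone, hker⟩ := hL
  have hn : (n : ℝ) ≠ 0 := Nat.cast_ne_zero.mpr (Nat.pos_of_ne_zero (by rintro rfl; exact i.elim0)).ne'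
  set u : Fin n → ℝ := Pi.single i 1 - Pi.single j 1 with hu_def
  have hu : u ≠ 0 := by
    intro h
    have := congrFun h i
    simp [hu_def, Pi.single_apply, hij.symm] at this
  set J : Matrix (Fin n) (Fin n) ℝ := Jmat n with hJ_def
  set M : Matrix (Fin n) (Fin n) ℝ := L + (1 / (n : ℝ)) • J with hM_def
  -- J basic facts
  have hJapp : ∀ a b, J a b = 1 := fun a b => rfl
  have hJmulvec : ∀ v : Fin n → ℝ, J *ᵥ v = fun _ => ∑ k, v k := by
    intro v; ext a; simp [hJ_def, Jmat, mulVec, dotProduct]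
  -- M is positive definite
  have hMpd : M.PosDef := by
    refine posDef_iff_dotProduct_mulVec.mpr ⟨?_, ?_⟩
    · show Mᴴ = M
      rw [hM_def, conjTranspose_add, conjTranspose_smul, hpsd.1]
      congr 1 <;> first
        | rfl
        | (ext a b; simp [hJ_def, Jmat])
    · intro x hx
      have hsx : star x = x := by simp
      have hquadJ : x ⬝ᵥ ((1 / (n : ℝ)) • J) *ᵥ x = (1/(n:ℝ)) * (∑ k, x k)^2 := by
        rw [smul_mulVec, dotProduct_smul, hJmulvec, smul_eq_mul]
        congr 1
        simp only [dotProduct, sq]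
        rw [Finset.sum_mul]
      have hL0 : 0 ≤ x ⬝ᵥ L *ᵥ x := by simpa [hsx] using hpsd.dotProduct_mulVec_nonneg x
      have hJ0 : 0 ≤ (1/(n:ℝ)) * (∑ k, x k)^2 := by positivity
      rw [hsx, hM_def, add_mulVec, dotProduct_add, hquadJ]
      rcases lt_or_eq_of_le hL0 with h | h
      · linarith
      rcases lt_or_eq_of_le hJ0 with h2 | h2
      · linarith
      exfalso
      have hLx : L *ᵥ x = 0 := by
        rw [← hpsd.dotProduct_mulVec_zero_iff x, hsx]; exact h.symm
      obtain ⟨c, rfl⟩ := hker x hLx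
      have hsum : (∑ _k : Fin n, c) = (n : ℝ) * c := by simp [mul_comm]
      have : (1/(n:ℝ)) * ((n:ℝ) * c)^2 = 0 := by rw [← hsum, ← h2]
      have hc : c = 0 := by
        rcases mul_eq_zero.mp this with h3 | h3
        · exact absurd h3 (one_div_ne_zero hn)
        · have h5 := pow_eq_zero_iff (n := 2) (by norm_num) |>.mp h3
          rcases mul_eq_zero.mp h5 with h4 | h4
          · exact absurd h4 hn
          · exact h4
      exact hx (by ext k; simp [hc])
  have hMdet : IsUnit M.det := hMpd.det_pos.ne'.isUnit
  have hMinv : M * M⁻¹ = 1 := mul_nonsing_inv M hMdet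
  have hMinv' : M⁻¹ * M = 1 := nonsing_inv_mul M hMdet
  have hMsymm : Mᵀ = M := hMpd.1
  have hMinvsymm : (M⁻¹)ᵀ = M⁻¹ := by rw [transpose_nonsing_inv, hMsymm]
  -- M⁻¹ * J = J and J * M⁻¹ = J
  have hM1 : M *ᵥ (fun _ => (1:ℝ)) = fun _ => (1:ℝ) := by
    rw [hM_def, add_mulVec, hone, smul_mulVec, hJmulvec]
    ext a; simp [hn]
  have hMi1 : M⁻¹ *ᵥ (fun _ => (1:ℝ)) = fun _ => (1:ℝ) := by
    have := congrArg (fun v => M⁻¹ *ᵥ v) hM1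
    simpa [mulVec_mulVec, hMinv'] using this.symm
  have hMiJ : M⁻¹ * J = J := by
    ext a b
    have := congrFun hMi1 a
    simp only [mulVec, dotProduct] at this
    simp [hJ_def, Jmat, mul_apply]
    simpa using this
  have hJMi : J * M⁻¹ = J := by
    have : (M⁻¹ * J)ᵀ = Jᵀ := by rw [hMiJ]
    rw [transpose_mul, hMinvsymm] at this
    have hJt : Jᵀ = J := by ext a b; rfl
    rwa [hJt] at this
  have hJJ : J * J = (n : ℝ) • J := by
    ext a b; simp [hJ_def, Jmat, mul_apply, Matrix.smul_apply]
  -- quantities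
  set r₁ : ℝ := u ⬝ᵥ M⁻¹ *ᵥ u with hr1_def
  set r₂ : ℝ := u ⬝ᵥ (M⁻¹ * M⁻¹) *ᵥ u with hr2_def
  have hr1pos : 0 < r₁ := by
    have := hMpd.inv.dotProduct_mulVec_pos hu
    simpa [hr1_def] using this
  have hr2nonneg : 0 ≤ r₂ := by
    have hps : ((M⁻¹)ᵀ * M⁻¹).PosSemidef := by
      have := posSemidef_conjTranspose_mul_self (M⁻¹)
      simpa using this
    have := hps.dotProduct_mulVec_nonneg u
    rw [hMinvsymm] at hps
    have := hps.dotProduct_mulVec_nonneg u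
    simpa [hr2_def] using this
  set c : ℝ := 1 + w * r₁ with hc_def
  have hcpos : 0 < c := by positivity
  set U : Matrix (Fin n) (Fin n) ℝ := vecMulVec u u with hU_def
  set N : Matrix (Fin n) (Fin n) ℝ := M + w • U with hN_def
  set X : Matrix (Fin n) (Fin n) ℝ := M⁻¹ - (w/c) • (M⁻¹ * U * M⁻¹) with hX_def
  have hUMU : U * M⁻¹ * U = r₁ • U := by rw [hU_def, aux_UAU]
  have hNX : N * X = 1 := by
    have e1 : M * (M⁻¹ * U * M⁻¹) = U * M⁻¹ := by
      rw [← Matrix.mul_assoc, ← Matrix.mul_assoc, hMinv, Matrix.one_mul]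
    have e2 : U * (M⁻¹ * U * M⁻¹) = r₁ • (U * M⁻¹) := by
      calc U * (M⁻¹ * U * M⁻¹) = U * M⁻¹ * U * M⁻¹ := by
            simp only [Matrix.mul_assoc]
        _ = r₁ • (U * M⁻¹) := by rw [hUMU, Matrix.smul_mul]
    have hcoef : w - (w / c) - w / c * w * r₁ = 0 := by
      have : c ≠ 0 := hcpos.ne'
      field_simp
      ring
    rw [hN_def, hX_def, add_mul, mul_sub, mul_sub, hMinv]
    simp only [Matrix.mul_smul, Matrix.smul_mul, smul_smul]
    rw [e1, e2, smul_smul]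
    calc (1 : Matrix (Fin n) (Fin n) ℝ) - (w / c) • (U * M⁻¹) +
          (w • (U * M⁻¹) - (w / c * w * r₁) • (U * M⁻¹))
        = 1 + (w - (w / c) - w / c * w * r₁) • (U * M⁻¹) := by
          rw [sub_smul, sub_smul]; abel
      _ = 1 := by rw [hcoef, zero_smul, add_zero]
  have hNinv : N⁻¹ = X := inv_eq_right_inv hNX
  -- rewrite lapPinv terms
  have hlapL : lapPinv L = M⁻¹ - (1/(n:ℝ)) • J := rfl
  have hlapadd : lapPinv (L + w • edgeLap i j) = X - (1/(n:ℝ)) • J := by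
    have hedge : edgeLap i j = U := rfl
    have : L + w • edgeLap i j + (1 / (n : ℝ)) • Jmat n = N := by
      rw [hedge, hN_def, hM_def, hJ_def]
      abel
    rw [lapPinv, this, hNinv]
  -- trace difference
  have htrace : (lapPinv L).trace - (lapPinv (L + w • edgeLap i j)).trace = (w/c) * r₂ := by
    rw [hlapL, hlapadd, hX_def]
    have htr : (M⁻¹ * U * M⁻¹).trace = r₂ := by
      rw [trace_mul_comm, ← Matrix.mul_assoc, trace_mul_comm, hU_def, aux_traceUA, ← hr2_def]
    simp only [trace_sub, trace_smul, smul_eq_mul, htr]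
    ring
  -- reff values
  have hquadJ0 : u ⬝ᵥ ((1/(n:ℝ)) • J) *ᵥ u = 0 := by
    rw [smul_mulVec, dotProduct_smul, hu_def, aux_quad]
    simp [hJapp]
  have hreff1 : reff L 1 i j = r₁ := by
    rw [reff, pow_one, hlapL]
    have h2 : (M⁻¹ - (1/(n:ℝ)) • J) i j = M⁻¹ i j - 1/(n:ℝ) := by
      simp [hJapp]
    have hsym : M⁻¹ i j = M⁻¹ j i := by
      have := congrFun (congrFun hMinvsymm i) j
      simpa [transpose_apply] using this.symm
    rw [hr1_def, hu_def, aux_quad]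
    simp only [Matrix.sub_apply, Matrix.smul_apply, smul_eq_mul, hJapp]
    rw [← hsym]
    ring
  have hsq : (lapPinv L)^2 = M⁻¹ * M⁻¹ - (1/(n:ℝ)) • J := by
    rw [hlapL, sq]
    rw [sub_mul, mul_sub, mul_sub]
    rw [Matrix.smul_mul, Matrix.mul_smul, Matrix.smul_mul, Matrix.mul_smul, smul_smul,
      hMiJ, hJMi, hJJ, smul_smul]
    have h3 : (1/(n:ℝ) * (1/(n:ℝ)) * (n:ℝ)) = 1/(n:ℝ) := by field_simp
    rw [h3]
    abel
  have hreff2 : reff L 2 i j = r₂ := by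
    rw [reff, hsq]
    have hsymm2 : (M⁻¹ * M⁻¹)ᵀ = M⁻¹ * M⁻¹ := by
      rw [transpose_mul, hMinvsymm]
    have hsym : (M⁻¹ * M⁻¹) i j = (M⁻¹ * M⁻¹) j i := by
      have := congrFun (congrFun hsymm2 i) j
      simpa [transpose_apply] using this.symm
    rw [hr2_def, hu_def, aux_quad]
    simp only [Matrix.sub_apply, Matrix.smul_apply, smul_eq_mul, hJapp]
    rw [← hsym]
    ring
  -- final inequality
  rw [htrace, hreff1, hreff2, div_mul_eq_mul_div, div_le_div_iff₀ hcpos hr1pos]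
  nlinarith [hr2nonneg, hc_def, hw, hr1pos]
end

section
/- Let ρ be a real-valued function on n×n real symmetric matrices and let g be a map from n×n real symmetric matrices to n×n real symmetric matrices such that: (i) for every symmetric L and symmetric Y, the function t ↦ ρ(L + tY) is differentiable with derivative at t equal to tr(g(L + tY) Y); and (ii) g is monotonically increasing with respect to the positive semidefinite order, i.e., L₁ ⪯ L₂ implies g(L₁) ⪯ g(L₂). Then for all symmetric matrices L₁ ⪯ L₂ and every symmetric positive semidefinite matrix X, the increments satisfy ρ(L₁ + X) − ρ(L₁) ≤ ρ(L₂ + X) − ρ(L₂). -/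
open Filter Finset Matrix

lemma psd_trace_nonneg {n : ℕ} {M : Matrix (Fin n) (Fin n) ℝ}
    (hM : M.PosSemidef) : 0 ≤ M.trace := by
  rw [Matrix.trace]
  refine Finset.sum_nonneg fun i _ => ?_
  have := hM.diag_nonneg (i := i)
  simpa [Matrix.mulVec_single, Matrix.diag] using this

open scoped MatrixOrder in
lemma trace_mul_nonneg_of_posSemidef {n : ℕ} {A B : Matrix (Fin n) (Fin n) ℝ}
    (hA : A.PosSemidef) (hB : B.PosSemidef) : 0 ≤ (A * B).trace := by
  obtain ⟨C, rfl⟩ := CStarAlgebra.nonneg_iff_eq_star_mul_self.mp hA.nonneg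
  rw [Matrix.star_eq_conjTranspose]
  have h : (C * B * Cᴴ).PosSemidef := hB.mul_mul_conjTranspose_same C
  calc (0:ℝ) ≤ (C * B * Cᴴ).trace := psd_trace_nonneg h
    _ = (Cᴴ * C * B).trace := by rw [Matrix.trace_mul_comm, ← Matrix.mul_assoc]

/-- If the gradient map `g` of `ρ` is monotone with respect to the Loewner order, then `ρ`
has antitone increments: `ρ(L₁+X) − ρ(L₁) ≤ ρ(L₂+X) − ρ(L₂)` whenever `L₁ ⪯ L₂` and
`X ⪰ 0` (the key step for supermodularity). -/
theorem increment_inequality_of_monotone_gradient {n : ℕ}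
    (ρ : Matrix (Fin n) (Fin n) ℝ → ℝ)
    (g : Matrix (Fin n) (Fin n) ℝ → Matrix (Fin n) (Fin n) ℝ)
    (hgsymm : ∀ L : Matrix (Fin n) (Fin n) ℝ, L.IsSymm → (g L).IsSymm)
    (hderiv : ∀ L Y : Matrix (Fin n) (Fin n) ℝ, L.IsSymm → Y.IsSymm → ∀ t : ℝ,
      HasDerivAt (fun s : ℝ => ρ (L + s • Y)) ((g (L + t • Y) * Y).trace) t)
    (hmono : ∀ L₁ L₂ : Matrix (Fin n) (Fin n) ℝ, L₁.IsSymm → L₂.IsSymm →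
      (L₂ - L₁).PosSemidef → (g L₂ - g L₁).PosSemidef)
    (L₁ L₂ X : Matrix (Fin n) (Fin n) ℝ) (h₁ : L₁.IsSymm) (h₂ : L₂.IsSymm)
    (hle : (L₂ - L₁).PosSemidef) (hX : X.PosSemidef) :
    ρ (L₁ + X) - ρ L₁ ≤ ρ (L₂ + X) - ρ L₂ := by
  have hXsymm : X.IsSymm := hX.isHermitian
  set f : ℝ → ℝ := fun t => ρ (L₂ + t • X) - ρ (L₁ + t • X) with hf
  have hderivf : ∀ t : ℝ, HasDerivAt f
      (((g (L₂ + t • X) - g (L₁ + t • X)) * X).trace) t := by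
    intro t
    have h1 := hderiv L₂ X h₂ hXsymm t
    have h2 := hderiv L₁ X h₁ hXsymm t
    have := h1.sub h2
    rw [Matrix.sub_mul, Matrix.trace_sub]
    exact this
  have hnonneg : ∀ t : ℝ, 0 ≤ ((g (L₂ + t • X) - g (L₁ + t • X)) * X).trace := by
    intro t
    refine trace_mul_nonneg_of_posSemidef ?_ hX
    refine hmono _ _ ?_ ?_ ?_
    · exact h₁.add (hXsymm.smul t)
    · exact h₂.add (hXsymm.smul t)
    · have : L₂ + t • X - (L₁ + t • X) = L₂ - L₁ := by abel
      rw [this]; exact hle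
  have hmonof : Monotone f := by
    apply monotone_of_deriv_nonneg
    · exact fun t => (hderivf t).differentiableAt
    · intro t
      rw [(hderivf t).deriv]
      exact hnonneg t
  have := hmonof (show (0:ℝ) ≤ 1 by norm_num)
  simp only [hf, zero_smul, one_smul, add_zero] at this
  linarith
end

section
/- Let κ > 1 and n ≥ 2. Then the normalized spectral function ρ(L) = (Σ_{i=2}^{n} λ_i(L)^{−κ})^{1/κ} is convex on the set of Laplacians of connected weighted graphs on n nodes: for any two such Laplacians L₁, L₂ and 0 ≤ α ≤ 1, the matrix αL₁ + (1−α)L₂ (for 0 < α < 1) is again the Laplacian of a connected weighted graph and ρ(αL₁ + (1−α)L₂) ≤ α ρ(L₁) + (1−α) ρ(L₂). -/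
open Filter Finset Matrix

variable {n : ℕ}

noncomputable def ginv (t : ℝ) : ℝ := if t = 0 then 0 else t⁻¹

lemma ginv_nonneg {t : ℝ} (ht : 0 ≤ t) : 0 ≤ ginv t := by
  unfold ginv; split <;> positivity

lemma mul_ginv_self {t : ℝ} : t * ginv t * ginv t = ginv t := by
  unfold ginv; split
  · simp
  · field_simp

structure EigData (n : ℕ) (L : Matrix (Fin n) (Fin n) ℝ) where
  d : Fin n → ℝ
  u : Fin n → (Fin n → ℝ)
  orth : ∀ i j, u i ⬝ᵥ u j = if i = j then 1 else 0
  expand : ∀ x : Fin n → ℝ, x = ∑ i, (u i ⬝ᵥ x) • u i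
  eig : ∀ i, L *ᵥ u i = d i • u i
  dnn : ∀ i, 0 ≤ d i

namespace EigData
variable {L : Matrix (Fin n) (Fin n) ℝ} (e : EigData n L)

lemma sum_smul_dot (f : Fin n → ℝ) (y : Fin n → ℝ) :
    (∑ j, f j • e.u j) ⬝ᵥ y = ∑ j, f j * (e.u j ⬝ᵥ y) := by
  simp [dotProduct, Finset.sum_mul, Finset.mul_sum, mul_assoc]
  exact Finset.sum_comm

lemma dot_sum_smul (f : Fin n → ℝ) (y : Fin n → ℝ) :
    y ⬝ᵥ (∑ j, f j • e.u j) = ∑ j, f j * (e.u j ⬝ᵥ y) := by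
  rw [dotProduct_comm, e.sum_smul_dot]

lemma sum_smul_dot_sum_smul (f g : Fin n → ℝ) :
    (∑ i, f i • e.u i) ⬝ᵥ (∑ j, g j • e.u j) = ∑ i, f i * g i := by
  rw [e.sum_smul_dot]
  refine Finset.sum_congr rfl fun i _ => ?_
  rw [e.dot_sum_smul]
  rw [Finset.sum_eq_single i]
  · rw [e.orth]; simp
  · intro j _ hj; rw [e.orth]; simp [hj]
  · simp

lemma mulVec_sum_smul (f : Fin n → ℝ) :
    L *ᵥ (∑ j, f j • e.u j) = ∑ j, (e.d j * f j) • e.u j := by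
  have : L *ᵥ (∑ j, f j • e.u j) = ∑ j, f j • (L *ᵥ e.u j) := by
    rw [← Matrix.mulVecLin_apply, map_sum]
    simp [Matrix.mulVecLin_apply, Matrix.mulVec_smul]
  rw [this]
  refine Finset.sum_congr rfl fun j _ => ?_
  rw [e.eig, smul_smul, mul_comm]


/-- coefficients of x in the eigenbasis -/
noncomputable def c (x : Fin n → ℝ) : Fin n → ℝ := fun i => e.u i ⬝ᵥ x

lemma qf (x : Fin n → ℝ) : x ⬝ᵥ (L *ᵥ x) = ∑ i, e.d i * (e.c x i) ^ 2 := by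
  conv_lhs => rw [e.expand x, e.mulVec_sum_smul, e.sum_smul_dot_sum_smul]
  refine Finset.sum_congr rfl fun i _ => ?_
  unfold c; ring

lemma parseval (x : Fin n → ℝ) : ∑ i, (e.c x i) ^ 2 = x ⬝ᵥ x := by
  conv_rhs => rw [e.expand x, e.sum_smul_dot_sum_smul]
  exact Finset.sum_congr rfl fun i _ => (sq _)

/-- spectral pseudo-inverse applied to a vector -/
noncomputable def Nv (x : Fin n → ℝ) : Fin n → ℝ :=
  ∑ j, (ginv (e.d j) * e.c x j) • e.u j

lemma dot_Nv (x : Fin n → ℝ) : x ⬝ᵥ e.Nv x = ∑ j, ginv (e.d j) * (e.c x j) ^ 2 := by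
  unfold Nv
  rw [e.dot_sum_smul]
  refine Finset.sum_congr rfl fun j _ => ?_
  unfold c; ring

lemma Nv_dot (x : Fin n → ℝ) : e.Nv x ⬝ᵥ x = ∑ j, ginv (e.d j) * (e.c x j) ^ 2 := by
  rw [dotProduct_comm, e.dot_Nv]

lemma Nv_dot_mulVec_Nv (x : Fin n → ℝ) :
    e.Nv x ⬝ᵥ (L *ᵥ e.Nv x) = ∑ j, ginv (e.d j) * (e.c x j) ^ 2 := by
  unfold Nv
  rw [e.mulVec_sum_smul, e.sum_smul_dot_sum_smul]
  refine Finset.sum_congr rfl fun j _ => ?_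
  have := mul_ginv_self (t := e.d j)
  nlinarith [this]

lemma dot_Nv_nonneg (x : Fin n → ℝ) : 0 ≤ x ⬝ᵥ e.Nv x := by
  rw [e.dot_Nv]
  exact Finset.sum_nonneg fun j _ => mul_nonneg (ginv_nonneg (e.dnn j)) (sq_nonneg _)

/-- eigenvectors with nonzero eigenvalue are orthogonal to the kernel vector 𝟙 -/
lemma u_dot_one (hone : L *ᵥ (fun _ => (1:ℝ)) = 0) {i : Fin n} (hi : e.d i ≠ 0) :
    e.u i ⬝ᵥ (fun _ => (1:ℝ)) = 0 := by
  have h1 : e.u i ⬝ᵥ (L *ᵥ (fun _ => (1:ℝ))) = 0 := by rw [hone]; simp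
  have h2 : e.u i ⬝ᵥ (L *ᵥ (fun _ => (1:ℝ)))
      = e.d i * (e.u i ⬝ᵥ (fun _ => (1:ℝ))) := by
    conv_lhs => rw [e.expand (fun _ => (1:ℝ)), e.mulVec_sum_smul, e.dot_sum_smul]
    rw [Finset.sum_eq_single i (fun j _ hj => by rw [e.orth]; simp [hj]) (by simp)]
    rw [e.orth]; simp [EigData.c, mul_comm]
  rw [h2] at h1
  exact (mul_eq_zero.mp h1).resolve_left hi

end EigData

namespace EigData
variable {L : Matrix (Fin n) (Fin n) ℝ} (e : EigData n L)

lemma c_one_eq_zero (hker : ∀ v : Fin n → ℝ, L *ᵥ v = 0 → ∃ c : ℝ, v = fun _ => c)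
    {j : Fin n} (hj : e.d j = 0) {x : Fin n → ℝ} (hx : (fun _ => (1:ℝ)) ⬝ᵥ x = 0) :
    e.c x j = 0 := by
  have hk : L *ᵥ e.u j = 0 := by rw [e.eig, hj, zero_smul]
  obtain ⟨cst, hc⟩ := hker _ hk
  unfold c
  rw [hc]
  simp only [dotProduct] at hx ⊢
  simp only [one_mul] at hx
  calc ∑ k, cst * x k = cst * ∑ k, x k := by rw [Finset.mul_sum]
  _ = 0 := by rw [hx, mul_zero]

lemma mulVec_Nv (hker : ∀ v : Fin n → ℝ, L *ᵥ v = 0 → ∃ c : ℝ, v = fun _ => c)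
    {x : Fin n → ℝ} (hx : (fun _ => (1:ℝ)) ⬝ᵥ x = 0) :
    L *ᵥ e.Nv x = x := by
  unfold Nv
  rw [e.mulVec_sum_smul]
  conv_rhs => rw [e.expand x]
  refine Finset.sum_congr rfl fun j _ => ?_
  rcases eq_or_ne (e.d j) 0 with hj | hj
  · rw [e.c_one_eq_zero hker hj hx]
    show (e.d j * (ginv (e.d j) * 0)) • e.u j = (e.u j ⬝ᵥ x) • e.u j
    have : e.u j ⬝ᵥ x = e.c x j := rfl
    rw [this, e.c_one_eq_zero hker hj hx]
    simp
  · show (e.d j * (ginv (e.d j) * e.c x j)) • e.u j = (e.u j ⬝ᵥ x) • e.u j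
    have : ginv (e.d j) = (e.d j)⁻¹ := if_neg hj
    rw [this, ← mul_assoc, mul_inv_cancel₀ hj, one_mul]
    rfl

lemma sym_dot' (hH : L.IsHermitian) (a b : Fin n → ℝ) :
    a ⬝ᵥ (L *ᵥ b) = b ⬝ᵥ (L *ᵥ a) := by
  have hsym : Lᵀ = L := hH
  rw [dotProduct_mulVec, ← mulVec_transpose, hsym, dotProduct_comm]

lemma key_lower (hp : L.PosSemidef)
    (hker : ∀ v : Fin n → ℝ, L *ᵥ v = 0 → ∃ c : ℝ, v = fun _ => c)
    (x w : Fin n → ℝ) (hx : (fun _ => (1:ℝ)) ⬝ᵥ x = 0) :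
    2 * (w ⬝ᵥ x) - w ⬝ᵥ (L *ᵥ w) ≤ x ⬝ᵥ e.Nv x := by
  have hz := hp.dotProduct_mulVec_nonneg (e.Nv x - w)
  rw [star_trivial] at hz
  rw [Matrix.mulVec_sub, sub_dotProduct, dotProduct_sub, dotProduct_sub,
    e.mulVec_Nv hker hx] at hz
  have h1 : e.Nv x ⬝ᵥ (L *ᵥ w) = w ⬝ᵥ x := by
    rw [sym_dot' hp.1, e.mulVec_Nv hker hx, dotProduct_comm]
  have h2 : e.Nv x ⬝ᵥ x = x ⬝ᵥ e.Nv x := dotProduct_comm _ _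
  have h3 : w ⬝ᵥ x = x ⬝ᵥ w := dotProduct_comm _ _
  linarith

lemma c_u (i j : Fin n) : e.c (e.u i) j = if j = i then 1 else 0 := e.orth j i

lemma dot_Nv_u (i : Fin n) : e.u i ⬝ᵥ e.Nv (e.u i) = ginv (e.d i) := by
  rw [e.dot_Nv]
  rw [Finset.sum_eq_single i (fun j _ hj => by rw [e.c_u]; simp [hj]) (by simp)]
  rw [e.c_u]; simp


end EigData

noncomputable def mkEigData {L : Matrix (Fin n) (Fin n) ℝ} (hL : L.PosSemidef) :
    EigData n L where
  d := hL.1.eigenvalues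
  u := fun i => ⇑(hL.1.eigenvectorBasis i)
  orth := by
    intro i j
    have h := hL.1.eigenvectorBasis.orthonormal
    rw [orthonormal_iff_ite] at h
    have := h i j
    rw [PiLp.inner_apply] at this
    simpa [dotProduct, mul_comm] using this
  expand := by
    intro x
    have h := congrArg WithLp.ofLp (hL.1.eigenvectorBasis.sum_repr' (WithLp.toLp 2 x)).symm
    simp only [PiLp.inner_apply, RCLike.inner_apply, conj_trivial] at h
    simpa [dotProduct, mul_comm] using h
  eig := fun i => hL.1.mulVec_eigenvectorBasis i
  dnn := fun i => hL.eigenvalues_nonneg i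

@[simp] lemma mkEigData_d {L : Matrix (Fin n) (Fin n) ℝ} (hL : L.PosSemidef) :
    (mkEigData hL).d = hL.1.eigenvalues := rfl

/-- convexity of the quadratic form of the pseudoinverse -/
lemma Nv_convex {L₁ L₂ : Matrix (Fin n) (Fin n) ℝ} {α : ℝ}
    (h₁p : L₁.PosSemidef) (h₂p : L₂.PosSemidef)
    (h₁k : ∀ v : Fin n → ℝ, L₁ *ᵥ v = 0 → ∃ c : ℝ, v = fun _ => c)
    (h₂k : ∀ v : Fin n → ℝ, L₂ *ᵥ v = 0 → ∃ c : ℝ, v = fun _ => c)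
    (hα0 : 0 ≤ α) (hα1 : α ≤ 1)
    (eM : EigData n (α • L₁ + (1 - α) • L₂)) (e₁ : EigData n L₁) (e₂ : EigData n L₂)
    (x : Fin n → ℝ) (hx : (fun _ => (1:ℝ)) ⬝ᵥ x = 0) :
    x ⬝ᵥ eM.Nv x ≤ α * (x ⬝ᵥ e₁.Nv x) + (1 - α) * (x ⬝ᵥ e₂.Nv x) := by
  set w := eM.Nv x with hw
  have hsplit : w ⬝ᵥ ((α • L₁ + (1 - α) • L₂) *ᵥ w)
      = α * (w ⬝ᵥ (L₁ *ᵥ w)) + (1 - α) * (w ⬝ᵥ (L₂ *ᵥ w)) := by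
    rw [Matrix.add_mulVec, dotProduct_add, Matrix.smul_mulVec,
      Matrix.smul_mulVec, dotProduct_smul, dotProduct_smul]
    simp [smul_eq_mul]
  have hQ1 : x ⬝ᵥ eM.Nv x = 2 * (w ⬝ᵥ x) - w ⬝ᵥ ((α • L₁ + (1 - α) • L₂) *ᵥ w) := by
    rw [eM.dot_Nv, hw, eM.Nv_dot, eM.Nv_dot_mulVec_Nv]
    ring
  have k₁ := e₁.key_lower h₁p h₁k x w hx
  have k₂ := e₂.key_lower h₂p h₂k x w hx
  nlinarith [k₁, k₂, hQ1, hsplit]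

lemma rpow_ginv {t : ℝ} (ht : 0 ≤ t) {κ : ℝ} (hκ : κ ≠ 0) : ginv t ^ κ = t ^ (-κ) := by
  rcases eq_or_ne t 0 with h | h
  · subst h
    rw [show ginv 0 = 0 from if_pos rfl, Real.zero_rpow hκ, Real.zero_rpow (neg_ne_zero.mpr hκ)]
  · rw [show ginv t = t⁻¹ from if_neg h, Real.inv_rpow ht, Real.rpow_neg ht]


lemma holder_step {n : ℕ} {κ : ℝ} (hκ : 1 < κ) (ν A : Fin n → ℝ) (p : Fin n → Fin n → ℝ)
    (hν : ∀ i, 0 ≤ ν i) (hA : ∀ j, 0 ≤ A j) (hp : ∀ i j, 0 ≤ p i j)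
    (hrow : ∀ i, ∑ j, p i j = 1) (hcol : ∀ j, ∑ i, p i j = 1) :
    ∑ i, ν i ^ (κ - 1) * ∑ j, p i j * A j ≤
      (∑ i, ν i ^ κ) ^ (1 - 1/κ) * (∑ j, A j ^ κ) ^ (1/κ) := by
  have hκ0 : (0:ℝ) < κ := by linarith
  have hκ1 : (0:ℝ) < κ - 1 := by linarith
  set κ' : ℝ := κ / (κ - 1) with hκ'def
  have hκ'pos : 0 < κ' := by positivity
  have hpq : κ'.HolderConjugate κ := (Real.HolderConjugate.conjExponent hκ).symm
  have hsum1 : 1/κ' + 1/κ = 1 := by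
    rw [one_div, one_div]; exact hpq.inv_add_inv_eq_one
  have hκ'mul : (κ - 1) * κ' = κ := by rw [hκ'def]; field_simp
  have hκ'cancel : (1/κ') * κ' = 1 := by
    rw [one_div, inv_mul_cancel₀ (ne_of_gt hκ'pos)]
  have hκcancel : (1/κ) * κ = 1 := by
    rw [one_div, inv_mul_cancel₀ (ne_of_gt hκ0)]
  set f : Fin n × Fin n → ℝ := fun z => ν z.1 ^ (κ - 1) * p z.1 z.2 ^ (1/κ') with hf
  set g : Fin n × Fin n → ℝ := fun z => A z.2 * p z.1 z.2 ^ (1/κ) with hg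
  have hfnn : ∀ z : Fin n × Fin n, 0 ≤ f z := fun z =>
    mul_nonneg (Real.rpow_nonneg (hν _) _) (Real.rpow_nonneg (hp _ _) _)
  have hgnn : ∀ z : Fin n × Fin n, 0 ≤ g z := fun z =>
    mul_nonneg (hA _) (Real.rpow_nonneg (hp _ _) _)
  have hH := Real.inner_le_Lp_mul_Lq (univ : Finset (Fin n × Fin n)) f g hpq
  have hfg : ∑ z : Fin n × Fin n, f z * g z = ∑ i, ν i ^ (κ - 1) * ∑ j, p i j * A j := by
    rw [Fintype.sum_prod_type]
    refine Finset.sum_congr rfl fun i _ => ?_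
    rw [Finset.mul_sum]
    refine Finset.sum_congr rfl fun j _ => ?_
    have hpp : p i j ^ (1/κ') * p i j ^ (1/κ) = p i j := by
      rw [← Real.rpow_add' (hp _ _) (by rw [hsum1]; norm_num), hsum1, Real.rpow_one]
    calc ν i ^ (κ - 1) * p i j ^ (1/κ') * (A j * p i j ^ (1/κ))
        = ν i ^ (κ - 1) * (p i j ^ (1/κ') * p i j ^ (1/κ)) * A j := by ring
    _ = ν i ^ (κ - 1) * (p i j * A j) := by rw [hpp]; ring
  have hfp : ∑ z : Fin n × Fin n, |f z| ^ κ' = ∑ i, ν i ^ κ := by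
    rw [Fintype.sum_prod_type]
    calc ∑ i, ∑ j, |f (i, j)| ^ κ' = ∑ i, ∑ j, ν i ^ κ * p i j := by
          refine Finset.sum_congr rfl fun i _ => Finset.sum_congr rfl fun j _ => ?_
          rw [abs_of_nonneg (hfnn (i, j)), hf]
          simp only []
          rw [Real.mul_rpow (Real.rpow_nonneg (hν _) _) (Real.rpow_nonneg (hp _ _) _),
            ← Real.rpow_mul (hν i), ← Real.rpow_mul (hp i j), hκ'mul, hκ'cancel,
            Real.rpow_one]
    _ = ∑ i, ν i ^ κ := by
          refine Finset.sum_congr rfl fun i _ => ?_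
          rw [← Finset.mul_sum, hrow i, mul_one]
  have hgp : ∑ z : Fin n × Fin n, |g z| ^ κ = ∑ j, A j ^ κ := by
    rw [Fintype.sum_prod_type]
    rw [Finset.sum_comm]
    calc ∑ j, ∑ i, |g (i, j)| ^ κ = ∑ j, ∑ i, A j ^ κ * p i j := by
          refine Finset.sum_congr rfl fun j _ => Finset.sum_congr rfl fun i _ => ?_
          rw [abs_of_nonneg (hgnn (i, j)), hg]
          simp only []
          rw [Real.mul_rpow (hA _) (Real.rpow_nonneg (hp _ _) _),
            ← Real.rpow_mul (hp i j), hκcancel, Real.rpow_one]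
    _ = ∑ j, A j ^ κ := by
          refine Finset.sum_congr rfl fun j _ => ?_
          rw [← Finset.mul_sum, hcol j, mul_one]
  rw [hfg, hfp, hgp] at hH
  have h1κ' : 1/κ' = 1 - 1/κ := by linarith
  rw [h1κ'] at hH
  exact hH

lemma core {L₁ L₂ : Matrix (Fin n) (Fin n) ℝ} {α κ : ℝ} (hκ : 1 < κ)
    (h₁p : L₁.PosSemidef) (h₂p : L₂.PosSemidef)
    (h₁k : ∀ v : Fin n → ℝ, L₁ *ᵥ v = 0 → ∃ c : ℝ, v = fun _ => c)
    (h₂k : ∀ v : Fin n → ℝ, L₂ *ᵥ v = 0 → ∃ c : ℝ, v = fun _ => c)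
    (hα0 : 0 ≤ α) (hα1 : α ≤ 1)
    (eM : EigData n (α • L₁ + (1 - α) • L₂)) (e₁ : EigData n L₁) (e₂ : EigData n L₂)
    (hMone : (α • L₁ + (1 - α) • L₂) *ᵥ (fun _ => (1:ℝ)) = 0) :
    (∑ i, ginv (eM.d i) ^ κ) ^ (1/κ) ≤
      α * (∑ j, ginv (e₁.d j) ^ κ) ^ (1/κ) + (1 - α) * (∑ j, ginv (e₂.d j) ^ κ) ^ (1/κ) := by
  have hκ0 : κ ≠ 0 := by linarith
  have hκ1 : κ - 1 ≠ 0 := by linarith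
  set ν : Fin n → ℝ := fun i => ginv (eM.d i) with hν
  set A : Fin n → ℝ := fun j => ginv (e₁.d j) with hA
  set B : Fin n → ℝ := fun j => ginv (e₂.d j) with hB
  have hνnn : ∀ i, 0 ≤ ν i := fun i => ginv_nonneg (eM.dnn i)
  have hAnn : ∀ j, 0 ≤ A j := fun j => ginv_nonneg (e₁.dnn j)
  have hBnn : ∀ j, 0 ≤ B j := fun j => ginv_nonneg (e₂.dnn j)
  set p : Fin n → Fin n → ℝ := fun i j => (e₁.u j ⬝ᵥ eM.u i) ^ 2 with hp
  set q : Fin n → Fin n → ℝ := fun i j => (e₂.u j ⬝ᵥ eM.u i) ^ 2 with hq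
  set S := ∑ i, ν i ^ κ with hS
  set SA := ∑ j, A j ^ κ with hSA
  set SB := ∑ j, B j ^ κ with hSB
  have hSnn : 0 ≤ S := Finset.sum_nonneg fun i _ => Real.rpow_nonneg (hνnn i) κ
  have hSAnn : 0 ≤ SA := Finset.sum_nonneg fun j _ => Real.rpow_nonneg (hAnn j) κ
  have hSBnn : 0 ≤ SB := Finset.sum_nonneg fun j _ => Real.rpow_nonneg (hBnn j) κ
  -- row and column sums
  have hrow1 : ∀ i, ∑ j, p i j = 1 := by
    intro i
    have := e₁.parseval (eM.u i)
    simp only [EigData.c] at this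
    rw [hp]
    simp only []
    rw [this, eM.orth]
    simp
  have hrow2 : ∀ i, ∑ j, q i j = 1 := by
    intro i
    have := e₂.parseval (eM.u i)
    simp only [EigData.c] at this
    rw [hq]
    simp only []
    rw [this, eM.orth]
    simp
  have hcol1 : ∀ j, ∑ i, p i j = 1 := by
    intro j
    have := eM.parseval (e₁.u j)
    simp only [EigData.c] at this
    have h2 : ∀ i, p i j = (eM.u i ⬝ᵥ e₁.u j) ^ 2 := by
      intro i; rw [hp]; simp only []; rw [dotProduct_comm]
    calc ∑ i, p i j = ∑ i, (eM.u i ⬝ᵥ e₁.u j) ^ 2 := Finset.sum_congr rfl fun i _ => h2 i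
    _ = e₁.u j ⬝ᵥ e₁.u j := this
    _ = 1 := by rw [e₁.orth]; simp
  have hcol2 : ∀ j, ∑ i, q i j = 1 := by
    intro j
    have := eM.parseval (e₂.u j)
    simp only [EigData.c] at this
    have h2 : ∀ i, q i j = (eM.u i ⬝ᵥ e₂.u j) ^ 2 := by
      intro i; rw [hq]; simp only []; rw [dotProduct_comm]
    calc ∑ i, q i j = ∑ i, (eM.u i ⬝ᵥ e₂.u j) ^ 2 := Finset.sum_congr rfl fun i _ => h2 i
    _ = e₂.u j ⬝ᵥ e₂.u j := this
    _ = 1 := by rw [e₂.orth]; simp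
  have hpnn : ∀ i j, 0 ≤ p i j := fun i j => sq_nonneg _
  have hqnn : ∀ i j, 0 ≤ q i j := fun i j => sq_nonneg _
  -- Step 1
  have step1 : ∀ i, ν i ^ κ ≤ (ν i ^ (κ - 1)) *
      (α * (∑ j, p i j * A j) + (1 - α) * (∑ j, q i j * B j)) := by
    intro i
    rcases eq_or_ne (eM.d i) 0 with hd | hd
    · have hν0 : ν i = 0 := by rw [hν]; simp only []; rw [hd]; exact if_pos rfl
      rw [hν0, Real.zero_rpow hκ0, Real.zero_rpow hκ1, zero_mul]
    · have hx : (fun _ => (1:ℝ)) ⬝ᵥ eM.u i = 0 := by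
        rw [dotProduct_comm]; exact eM.u_dot_one hMone hd
      have hQ3 := Nv_convex h₁p h₂p h₁k h₂k hα0 hα1 eM e₁ e₂ (eM.u i) hx
      rw [eM.dot_Nv_u] at hQ3
      have he1 : eM.u i ⬝ᵥ e₁.Nv (eM.u i) = ∑ j, p i j * A j := by
        rw [e₁.dot_Nv]
        refine Finset.sum_congr rfl fun j _ => ?_
        rw [hp, hA]; simp only [EigData.c]; ring
      have he2 : eM.u i ⬝ᵥ e₂.Nv (eM.u i) = ∑ j, q i j * B j := by
        rw [e₂.dot_Nv]
        refine Finset.sum_congr rfl fun j _ => ?_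
        rw [hq, hB]; simp only [EigData.c]; ring
      rw [he1, he2] at hQ3
      have hνpos : 0 < ν i := by
        have : ν i ≠ 0 := by
          rw [hν]; simp only []; rw [show ginv (eM.d i) = (eM.d i)⁻¹ from if_neg hd]
          exact inv_ne_zero hd
        exact lt_of_le_of_ne (hνnn i) (Ne.symm this)
      have hβnn : 0 ≤ ν i ^ (κ - 1) := Real.rpow_nonneg (hνnn i) _
      calc ν i ^ κ = ν i ^ (κ - 1) * ν i := by
            rw [← Real.rpow_add_one (ne_of_gt hνpos) (κ - 1)]
            norm_num
      _ ≤ ν i ^ (κ - 1) * (α * (∑ j, p i j * A j) + (1 - α) * (∑ j, q i j * B j)) :=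
            mul_le_mul_of_nonneg_left hQ3 hβnn
  have step1' : S ≤ α * (∑ i, ν i ^ (κ - 1) * ∑ j, p i j * A j)
      + (1 - α) * (∑ i, ν i ^ (κ - 1) * ∑ j, q i j * B j) := by
    rw [hS, Finset.mul_sum, Finset.mul_sum, ← Finset.sum_add_distrib]
    refine Finset.sum_le_sum fun i _ => ?_
    calc ν i ^ κ ≤ (ν i ^ (κ - 1)) *
        (α * (∑ j, p i j * A j) + (1 - α) * (∑ j, q i j * B j)) := step1 i
    _ = α * (ν i ^ (κ - 1) * ∑ j, p i j * A j)
        + (1 - α) * (ν i ^ (κ - 1) * ∑ j, q i j * B j) := by ring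
  have stepA := holder_step hκ ν A p hνnn hAnn hpnn hrow1 hcol1
  have stepB := holder_step hκ ν B q hνnn hBnn hqnn hrow2 hcol2
  rw [← hS, ← hSA] at stepA
  rw [← hS, ← hSB] at stepB
  have combined : S ≤ S ^ (1 - 1/κ) * (α * SA ^ (1/κ) + (1 - α) * SB ^ (1/κ)) := by
    calc S ≤ α * (∑ i, ν i ^ (κ - 1) * ∑ j, p i j * A j)
        + (1 - α) * (∑ i, ν i ^ (κ - 1) * ∑ j, q i j * B j) := step1'
    _ ≤ α * (S ^ (1 - 1/κ) * SA ^ (1/κ)) + (1 - α) * (S ^ (1 - 1/κ) * SB ^ (1/κ)) :=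
        add_le_add (mul_le_mul_of_nonneg_left stepA hα0)
          (mul_le_mul_of_nonneg_left stepB (by linarith))
    _ = S ^ (1 - 1/κ) * (α * SA ^ (1/κ) + (1 - α) * SB ^ (1/κ)) := by ring
  have hRHSnn : 0 ≤ α * SA ^ (1/κ) + (1 - α) * SB ^ (1/κ) :=
    add_nonneg (mul_nonneg hα0 (Real.rpow_nonneg hSAnn _))
      (mul_nonneg (by linarith) (Real.rpow_nonneg hSBnn _))
  rcases eq_or_lt_of_le hSnn with h0 | hpos
  · rw [← h0, Real.zero_rpow (one_div_ne_zero hκ0)]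
    exact hRHSnn
  · have hSsplit : S ^ (1 - 1/κ) * S ^ (1/κ) = S := by
      rw [← Real.rpow_add hpos]
      norm_num
    have hfac : 0 < S ^ (1 - 1/κ) := Real.rpow_pos_of_pos hpos _
    have : S ^ (1 - 1/κ) * S ^ (1/κ) ≤ S ^ (1 - 1/κ) * (α * SA ^ (1/κ) + (1 - α) * SB ^ (1/κ)) := by
      rw [hSsplit]
      exact combined
    exact le_of_mul_le_mul_left this hfac


namespace EigData
variable {L : Matrix (Fin n) (Fin n) ℝ}

lemma exists_d_zero (e : EigData n L) (hn : 0 < n) (hone : L *ᵥ (fun _ => (1:ℝ)) = 0) : ∃ i, e.d i = 0 := by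
  by_contra h
  push_neg at h
  have hall : ∀ i, e.u i ⬝ᵥ (fun _ => (1:ℝ)) = 0 := fun i => e.u_dot_one hone (h i)
  have hexp := e.expand (fun _ => (1:ℝ))
  have h0 : (fun _ => (1:ℝ)) = (0 : Fin n → ℝ) := by
    rw [hexp]
    refine Finset.sum_eq_zero fun i _ => ?_
    rw [hall i, zero_smul]
  exact one_ne_zero (congrFun h0 ⟨0, hn⟩)

lemma qf_zero (e : EigData n L) {x : Fin n → ℝ} (h : x ⬝ᵥ (L *ᵥ x) = 0) : L *ᵥ x = 0 := by
  rw [e.qf] at h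
  have hterm := (Finset.sum_eq_zero_iff_of_nonneg
    (fun i _ => mul_nonneg (e.dnn i) (sq_nonneg (e.c x i)))).mp h
  have hLx : L *ᵥ x = ∑ i, (e.d i * e.c x i) • e.u i := by
    conv_lhs => rw [e.expand x, e.mulVec_sum_smul]
    rfl
  rw [hLx]
  refine Finset.sum_eq_zero fun i _ => ?_
  rcases mul_eq_zero.mp (hterm i (Finset.mem_univ i)) with hd | hc
  · rw [hd, zero_mul, zero_smul]
  · rw [pow_eq_zero_iff (by norm_num)] at hc
    rw [hc, mul_zero, zero_smul]

end EigData

lemma sorted_sum {L : Matrix (Fin n) (Fin n) ℝ} (hp : L.PosSemidef)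
    (hone : L *ᵥ (fun _ => (1:ℝ)) = 0) (hn : 0 < n) {κ : ℝ} (hκ : κ ≠ 0) :
    ∑ i ∈ Finset.univ.filter (fun i : Fin n => 1 ≤ (i : ℕ)), sortedEigenvalues L i ^ (-κ)
      = ∑ i, ginv ((mkEigData hp).d i) ^ κ := by
  haveI : NeZero n := ⟨by omega⟩
  have hse : sortedEigenvalues L = hp.1.eigenvalues ∘ Tuple.sort hp.1.eigenvalues := by
    unfold sortedEigenvalues
    rw [dif_pos hp.1]
  set σ := Tuple.sort hp.1.eigenvalues with hσ
  have hfilter : Finset.univ.filter (fun i : Fin n => 1 ≤ (i : ℕ)) = Finset.univ.erase 0 := by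
    ext i
    simp only [Finset.mem_filter, Finset.mem_erase, Finset.mem_univ, true_and, and_true]
    rw [Nat.one_le_iff_ne_zero]
    constructor
    · intro hv h0; apply hv; rw [h0]; rfl
    · intro hv hc; exact hv (Fin.ext hc)
  obtain ⟨i₀, hi₀⟩ := (mkEigData hp).exists_d_zero hn hone
  have hdz : hp.1.eigenvalues (σ 0) = 0 := by
    have mono := Tuple.monotone_sort hp.1.eigenvalues
    have h1 : (hp.1.eigenvalues ∘ σ) 0 ≤ (hp.1.eigenvalues ∘ σ) (σ.symm i₀) :=
      mono (Fin.zero_le _)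
    simp only [Function.comp_apply, Equiv.apply_symm_apply] at h1
    have h2 : hp.1.eigenvalues i₀ = 0 := hi₀
    rw [h2] at h1
    exact le_antisymm h1 (hp.eigenvalues_nonneg _)
  rw [hfilter, hse]
  rw [Finset.sum_erase _ (by
    simp only [Function.comp_apply]
    rw [hdz, Real.zero_rpow (neg_ne_zero.mpr hκ)])]
  rw [show ∑ i, (hp.1.eigenvalues ∘ σ) i ^ (-κ) = ∑ i, hp.1.eigenvalues (σ i) ^ (-κ) from rfl]
  rw [Equiv.sum_comp σ (fun i => hp.1.eigenvalues i ^ (-κ))]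
  exact Finset.sum_congr rfl fun i _ =>
    (rpow_ginv (hp.eigenvalues_nonneg i) hκ).symm

/-- Convexity of the normalized spectral function ρ(L) = (Σ_{i=2}^n λ_i^{−κ})^{1/κ} on
connected-graph Laplacians, for κ > 1. -/
theorem normalized_zeta_convexOn_laplacians {n : ℕ} (hn : 2 ≤ n)
    (κ : ℝ) (hκ : 1 < κ)
    (L₁ L₂ : Matrix (Fin n) (Fin n) ℝ)
    (h₁ : IsConnLaplacian L₁) (h₂ : IsConnLaplacian L₂)
    (α : ℝ) (hα0 : 0 ≤ α) (hα1 : α ≤ 1) :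
    (0 < α → α < 1 → IsConnLaplacian (α • L₁ + (1 - α) • L₂)) ∧
      (∑ i ∈ Finset.univ.filter (fun i : Fin n => 1 ≤ (i : ℕ)),
          (sortedEigenvalues (α • L₁ + (1 - α) • L₂) i) ^ (-κ)) ^ (1 / κ) ≤
        α * (∑ i ∈ Finset.univ.filter (fun i : Fin n => 1 ≤ (i : ℕ)),
            (sortedEigenvalues L₁ i) ^ (-κ)) ^ (1 / κ) +
          (1 - α) * (∑ i ∈ Finset.univ.filter (fun i : Fin n => 1 ≤ (i : ℕ)),
            (sortedEigenvalues L₂ i) ^ (-κ)) ^ (1 / κ) := by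
  
  obtain ⟨h₁p, h₁one, h₁k⟩ := h₁
  obtain ⟨h₂p, h₂one, h₂k⟩ := h₂
  have hα1' : (0:ℝ) ≤ 1 - α := by linarith
  set M := α • L₁ + (1 - α) • L₂ with hM
  have hMone : M *ᵥ (fun _ => (1:ℝ)) = 0 := by
    rw [hM, Matrix.add_mulVec, Matrix.smul_mulVec, Matrix.smul_mulVec,
      h₁one, h₂one, smul_zero, smul_zero, add_zero]
  have hsplitq : ∀ x : Fin n → ℝ,
      x ⬝ᵥ (M *ᵥ x) = α * (x ⬝ᵥ (L₁ *ᵥ x)) + (1 - α) * (x ⬝ᵥ (L₂ *ᵥ x)) := by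
    intro x
    rw [hM, Matrix.add_mulVec, dotProduct_add, Matrix.smul_mulVec,
      Matrix.smul_mulVec, dotProduct_smul, dotProduct_smul]
    simp [smul_eq_mul]
  have hMp : M.PosSemidef := by
    rw [Matrix.posSemidef_iff_dotProduct_mulVec]; constructor
    · show Mᴴ = M
      rw [hM, conjTranspose_add, conjTranspose_smul, conjTranspose_smul]
      rw [show L₁ᴴ = L₁ from h₁p.1, show L₂ᴴ = L₂ from h₂p.1]
      norm_num
    · intro x
      rw [star_trivial, hsplitq x]
      have n1 := h₁p.dotProduct_mulVec_nonneg x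
      have n2 := h₂p.dotProduct_mulVec_nonneg x
      rw [star_trivial] at n1 n2
      exact add_nonneg (mul_nonneg hα0 n1) (mul_nonneg hα1' n2)
  constructor
  · intro hαpos hαlt
    refine ⟨hMp, hMone, fun v hv => ?_⟩
    have hq : v ⬝ᵥ (M *ᵥ v) = 0 := by rw [hv, dotProduct_zero]
    rw [hsplitq v] at hq
    have n1 := h₁p.dotProduct_mulVec_nonneg v
    have n2 := h₂p.dotProduct_mulVec_nonneg v
    rw [star_trivial] at n1 n2
    have hz1 : v ⬝ᵥ (L₁ *ᵥ v) = 0 := by nlinarith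
    exact h₁k v ((mkEigData h₁p).qf_zero hz1)
  · have hn0 : 0 < n := by omega
    have hκ0 : κ ≠ 0 := by linarith
    rw [sorted_sum hMp hMone hn0 hκ0, sorted_sum h₁p h₁one hn0 hκ0,
      sorted_sum h₂p h₂one hn0 hκ0]
    exact core hκ h₁p h₂p h₁k h₂k hα0 hα1 (mkEigData hMp) (mkEigData h₁p) (mkEigData h₂p) hMone
end

section
/- Let a and λ be real numbers with 0 < a ≤ λ. Then the improper integral over the real line satisfies ∫_{−∞}^{∞} log(1 − a²/(λ² + ω²)) dω = 2π (√(λ² − a²) − λ). -/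
open Filter Finset Matrix MeasureTheory Set

-- main key lemma: integral over Ioi 0
theorem key {a lam : ℝ} (ha : 0 < a) (halam : a ≤ lam) :
    ∫ ω in Ioi (0:ℝ), Real.log (1 - a ^ 2 / (lam ^ 2 + ω ^ 2)) =
      Real.pi * (Real.sqrt (lam ^ 2 - a ^ 2) - lam) := by
  have hlam : 0 < lam := lt_of_lt_of_le ha halam
  set b := Real.sqrt (lam ^ 2 - a ^ 2) with hbdef
  have hb0 : 0 ≤ b := Real.sqrt_nonneg _
  have hbsq : b ^ 2 = lam ^ 2 - a ^ 2 := Real.sq_sqrt (by nlinarith)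
  set F : ℝ → ℝ := fun x => -(x * Real.log ((b ^ 2 + x ^ 2) / (lam ^ 2 + x ^ 2))
      + 2 * b * Real.arctan (x / b) - 2 * lam * Real.arctan (x / lam)) with hF
  set G : ℝ → ℝ := fun x => -Real.log (1 - a ^ 2 / (lam ^ 2 + x ^ 2)) with hG
  have hpos : ∀ x : ℝ, 0 < lam ^ 2 + x ^ 2 := fun x => by positivity
  have hratio : ∀ x : ℝ, 1 - a ^ 2 / (lam ^ 2 + x ^ 2)
      = (b ^ 2 + x ^ 2) / (lam ^ 2 + x ^ 2) := by
    intro x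
    field_simp
    linarith [hbsq]
  -- derivative
  have hderiv : ∀ x ∈ Ioi (0:ℝ), HasDerivAt F (G x) x := by
    intro x hx
    have hx0 : (0:ℝ) < x := hx
    have hb2x : 0 < b ^ 2 + x ^ 2 := by positivity
    have h1 : HasDerivAt (fun y : ℝ => b ^ 2 + y ^ 2) (2 * x) x := by
      simpa using (hasDerivAt_pow 2 x).const_add (b ^ 2)
    have h2 : HasDerivAt (fun y : ℝ => lam ^ 2 + y ^ 2) (2 * x) x := by
      simpa using (hasDerivAt_pow 2 x).const_add (lam ^ 2)
    have hlog1 : HasDerivAt (fun y : ℝ => Real.log (b ^ 2 + y ^ 2))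
        (2 * x / (b ^ 2 + x ^ 2)) x := h1.log (ne_of_gt hb2x)
    have hlog2 : HasDerivAt (fun y : ℝ => Real.log (lam ^ 2 + y ^ 2))
        (2 * x / (lam ^ 2 + x ^ 2)) x := h2.log (ne_of_gt (hpos x))
    have hlogq : HasDerivAt (fun y : ℝ => Real.log ((b ^ 2 + y ^ 2) / (lam ^ 2 + y ^ 2)))
        (2 * x / (b ^ 2 + x ^ 2) - 2 * x / (lam ^ 2 + x ^ 2)) x := by
      refine (hlog1.sub hlog2).congr_of_eventuallyEq ?_
      filter_upwards [eventually_gt_nhds hx0] with y hy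
      rw [Real.log_div (by positivity) (ne_of_gt (hpos y))]
      rfl
    have hmul : HasDerivAt (fun y : ℝ => y * Real.log ((b ^ 2 + y ^ 2) / (lam ^ 2 + y ^ 2)))
        (Real.log ((b ^ 2 + x ^ 2) / (lam ^ 2 + x ^ 2))
          + x * (2 * x / (b ^ 2 + x ^ 2) - 2 * x / (lam ^ 2 + x ^ 2))) x := by
      simpa [add_comm, Pi.mul_def] using (hasDerivAt_id' (x := x)).mul hlogq
    have harct1 : HasDerivAt (fun y : ℝ => 2 * b * Real.arctan (y / b))
        (2 * b ^ 2 / (b ^ 2 + x ^ 2)) x := by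
      rcases eq_or_lt_of_le hb0 with hb | hb
      · simp only [← hb]
        simpa using (hasDerivAt_const x (0:ℝ))
      · have : HasDerivAt (fun y : ℝ => Real.arctan (y / b))
            ((1 / (1 + (x / b) ^ 2)) * (1 / b)) x :=
          ((hasDerivAt_id' (x := x)).div_const b).arctan
        have := this.const_mul (2 * b)
        refine this.congr_deriv ?_
        field_simp
    have harct2 : HasDerivAt (fun y : ℝ => 2 * lam * Real.arctan (y / lam))
        (2 * lam ^ 2 / (lam ^ 2 + x ^ 2)) x := by
      have : HasDerivAt (fun y : ℝ => Real.arctan (y / lam))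
          ((1 / (1 + (x / lam) ^ 2)) * (1 / lam)) x :=
        ((hasDerivAt_id' (x := x)).div_const lam).arctan
      have := this.const_mul (2 * lam)
      refine this.congr_deriv ?_
      field_simp
    have := ((hmul.add harct1).sub harct2).neg
    refine this.congr_deriv ?_
    have e1 : x * (2 * x / (b ^ 2 + x ^ 2) - 2 * x / (lam ^ 2 + x ^ 2))
        + 2 * b ^ 2 / (b ^ 2 + x ^ 2) - 2 * lam ^ 2 / (lam ^ 2 + x ^ 2) = 0 := by
      field_simp
      ring
    simp only [hG, hratio x]
    linarith [e1]
  -- nonnegativity of G on Ioi 0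
  have hnonneg : ∀ x ∈ Ioi (0:ℝ), 0 ≤ G x := by
    intro x hx
    simp only [hG, hratio x, neg_nonneg]
    refine Real.log_nonpos (by positivity) ?_
    rw [div_le_one (hpos x)]
    nlinarith [sq_nonneg a]
  -- continuity of F at 0 within Ici 0
  have hcont : ContinuousWithinAt F (Ici (0:ℝ)) 0 := by
    have harc : Continuous fun x : ℝ => 2 * b * Real.arctan (x / b) :=
      continuous_const.mul (Real.continuous_arctan.comp (continuous_id.div_const b))
    have harc2 : Continuous fun x : ℝ => 2 * lam * Real.arctan (x / lam) :=
      continuous_const.mul (Real.continuous_arctan.comp (continuous_id.div_const lam))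
    have hmain : ContinuousWithinAt
        (fun x : ℝ => x * Real.log ((b ^ 2 + x ^ 2) / (lam ^ 2 + x ^ 2))) (Ici 0) 0 := by
      rcases eq_or_lt_of_le hb0 with hb | hb
      · -- b = 0
        have hcc : Continuous fun x : ℝ =>
            2 * (x * Real.log x) - x * Real.log (lam ^ 2 + x ^ 2) := by
          refine (continuous_const.mul Real.continuous_mul_log).sub
            (continuous_id.mul ?_)
          exact (continuous_const.add (continuous_pow 2)).log fun x => ne_of_gt (hpos x)
        refine (hcc.continuousWithinAt).congr (fun y hy => ?_) ?_
        · rcases eq_or_lt_of_le (mem_Ici.mp hy) with hy0 | hy0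
          · simp [← hy0, ← hb]
          · rw [← hb]
            rw [Real.log_div (by positivity) (ne_of_gt (hpos y)),
              show (0:ℝ) ^ 2 + y ^ 2 = y ^ 2 by ring, Real.log_pow]
            push_cast
            ring
        · simp [← hb]
      · have : ContinuousAt
            (fun x : ℝ => x * Real.log ((b ^ 2 + x ^ 2) / (lam ^ 2 + x ^ 2))) 0 := by
          refine continuousAt_id.mul (ContinuousAt.log ?_ ?_)
          · exact ((continuous_const.add (continuous_pow 2)).div
              (continuous_const.add (continuous_pow 2)) fun x => ne_of_gt (hpos x)).continuousAt
          · positivity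
        exact this.continuousWithinAt
    exact ((hmain.add harc.continuousWithinAt).sub harc2.continuousWithinAt).neg
  -- limits at infinity
  have harctop : Tendsto Real.arctan atTop (nhds (Real.pi / 2)) :=
    Real.tendsto_arctan_atTop.mono_right nhdsWithin_le_nhds
  have hT1 : Tendsto (fun x : ℝ => x * Real.log ((b ^ 2 + x ^ 2) / (lam ^ 2 + x ^ 2)))
      atTop (nhds 0) := by
    have hlow : Tendsto (fun x : ℝ => -(2 * a ^ 2) / x) atTop (nhds 0) :=
      Tendsto.div_atTop tendsto_const_nhds tendsto_id
    refine tendsto_of_tendsto_of_tendsto_of_le_of_le' hlow tendsto_const_nhds ?_ ?_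
    · filter_upwards [eventually_ge_atTop a, eventually_gt_atTop (0:ℝ)] with x hax hx0
      rw [← hratio x]
      set t := a ^ 2 / (lam ^ 2 + x ^ 2) with htdef
      have ht0 : 0 ≤ t := by positivity
      have ht : t ≤ 1 / 2 := by
        rw [htdef, div_le_iff₀ (hpos x)]
        nlinarith
      have h1t : 0 < 1 - t := by linarith
      have hlog : -(2 * t) ≤ Real.log (1 - t) := by
        have h1 := Real.log_le_sub_one_of_pos (inv_pos.mpr h1t)
        rw [Real.log_inv] at h1
        have h2 : (1 - t)⁻¹ ≤ 2 * t + 1 := by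
          rw [inv_eq_one_div, div_le_iff₀ h1t]; nlinarith
        linarith
      have hxt : x * t * x ≤ a ^ 2 := by
        rw [htdef, mul_comm x, mul_assoc, div_mul_eq_mul_div, div_le_iff₀ (hpos x)]
        nlinarith
      have hxt2 : x * t ≤ a ^ 2 / x := by
        rw [le_div_iff₀ hx0]; linarith
      have := mul_le_mul_of_nonneg_left hlog (le_of_lt hx0)
      calc -(2 * a ^ 2) / x = -(2 * (a ^ 2 / x)) := by ring
        _ ≤ -(2 * (x * t)) := by linarith
        _ = x * (-(2 * t)) := by ring
        _ ≤ x * Real.log (1 - t) := this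
    · filter_upwards [eventually_gt_atTop (0:ℝ)] with x hx0
      have : Real.log ((b ^ 2 + x ^ 2) / (lam ^ 2 + x ^ 2)) ≤ 0 := by
        refine Real.log_nonpos (by positivity) ?_
        rw [div_le_one (hpos x)]
        nlinarith [sq_nonneg a]
      nlinarith
  have hT2 : Tendsto (fun x : ℝ => 2 * b * Real.arctan (x / b)) atTop
      (nhds (Real.pi * b)) := by
    rcases eq_or_lt_of_le hb0 with hb | hb
    · simp [← hb]
    · have : Tendsto (fun x : ℝ => 2 * b * Real.arctan (x / b)) atTop
          (nhds (2 * b * (Real.pi / 2))) :=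
        (harctop.comp (tendsto_id.atTop_div_const hb)).const_mul (2 * b)
      convert this using 2
      ring
  have hT3 : Tendsto (fun x : ℝ => 2 * lam * Real.arctan (x / lam)) atTop
      (nhds (Real.pi * lam)) := by
    have : Tendsto (fun x : ℝ => 2 * lam * Real.arctan (x / lam)) atTop
        (nhds (2 * lam * (Real.pi / 2))) :=
      (harctop.comp (tendsto_id.atTop_div_const hlam)).const_mul (2 * lam)
    convert this using 2
    ring
  have htop : Tendsto F atTop (nhds (Real.pi * (lam - b))) := by
    have h := ((hT1.add hT2).sub hT3).neg
    have e : Real.pi * (lam - b) = -(0 + Real.pi * b - Real.pi * lam) := by ring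
    rw [e]
    exact h
  have hint := integral_Ioi_of_hasDerivAt_of_nonneg hcont hderiv hnonneg htop
  have hF0 : F 0 = 0 := by simp [hF]
  rw [hF0, sub_zero] at hint
  have : ∫ x in Ioi (0:ℝ), G x
      = -∫ x in Ioi (0:ℝ), Real.log (1 - a ^ 2 / (lam ^ 2 + x ^ 2)) := by
    rw [hG, ← integral_neg]
  rw [this] at hint
  linarith [hint]

/-- The γ-entropy integral: for `0 < a ≤ lam`,
`∫_ℝ log(1 − a²/(lam² + ω²)) dω = 2π (√(lam² − a²) − lam)`. -/
theorem integral_log_one_sub_sq_div {a lam : ℝ} (ha : 0 < a) (halam : a ≤ lam) :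
    ∫ ω : ℝ, Real.log (1 - a ^ 2 / (lam ^ 2 + ω ^ 2)) =
      2 * Real.pi * (Real.sqrt (lam ^ 2 - a ^ 2) - lam) := by
  have h := key ha halam
  have : ∫ ω : ℝ, Real.log (1 - a ^ 2 / (lam ^ 2 + ω ^ 2))
      = ∫ ω : ℝ, Real.log (1 - a ^ 2 / (lam ^ 2 + |ω| ^ 2)) := by
    simp [sq_abs]
  rw [this, integral_comp_abs (f := fun ω => Real.log (1 - a ^ 2 / (lam ^ 2 + ω ^ 2))), h]
  ring
end

section
/- For every real x > 0, one has lim_{γ → ∞} γ² ( x − √(x² − γ⁻²) ) = 1/(2x). Consequently, the γ-entropy of a linear consensus network, I_γ(L) = Σ_{i=2}^n γ²(λ_i − √(λ_i² − γ⁻²)), converges as γ → ∞ to (1/2) Σ_{i=2}^n λ_i⁻¹, the squared H₂-norm of the network. -/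
open Filter Finset Matrix

lemma aux_limit (x : ℝ) (hx : 0 < x) :
    Tendsto (fun γ : ℝ => γ ^ 2 * (x - Real.sqrt (x ^ 2 - (γ ^ 2)⁻¹)))
      atTop (nhds (1 / (2 * x))) := by
  have h1 : Tendsto (fun γ : ℝ => (γ ^ 2)⁻¹) atTop (nhds 0) :=
    (tendsto_pow_atTop (two_ne_zero)).inv_tendsto_atTop
  have h2 : Tendsto (fun γ : ℝ => Real.sqrt (x ^ 2 - (γ ^ 2)⁻¹)) atTop (nhds x) := by
    have hsub : Tendsto (fun γ : ℝ => x ^ 2 - (γ ^ 2)⁻¹) atTop (nhds (x ^ 2)) := by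
      simpa using tendsto_const_nhds.sub h1
    simpa [Real.sqrt_sq hx.le, Function.comp_def] using (Real.continuous_sqrt.tendsto (x ^ 2)).comp hsub
  have hden : x + x ≠ 0 := by positivity
  have h3 : Tendsto (fun γ : ℝ => 1 / (x + Real.sqrt (x ^ 2 - (γ ^ 2)⁻¹)))
      atTop (nhds (1 / (2 * x))) := by
    have := Tendsto.div (tendsto_const_nhds (α := ℝ) (x := (1 : ℝ)) (f := atTop)) (tendsto_const_nhds.add h2) hden
    simpa [two_mul, Pi.div_def] using this
  refine h3.congr' ?_
  filter_upwards [eventually_ge_atTop (max 1 x⁻¹)] with γ hγ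
  have hγ1 : (1 : ℝ) ≤ γ := le_trans (le_max_left _ _) hγ
  have hγ0 : 0 < γ := lt_of_lt_of_le one_pos hγ1
  have hinv : γ⁻¹ ≤ x := by
    rw [inv_le_comm₀ hγ0 hx]
    exact le_trans (le_max_right _ _) hγ
  have hle : (γ ^ 2)⁻¹ ≤ x ^ 2 := by
    rw [← inv_pow]
    exact pow_le_pow_left₀ (inv_nonneg.2 hγ0.le) hinv 2
  set s := Real.sqrt (x ^ 2 - (γ ^ 2)⁻¹) with hs
  have hs0 : 0 ≤ s := Real.sqrt_nonneg _
  have hssq : s ^ 2 = x ^ 2 - (γ ^ 2)⁻¹ := Real.sq_sqrt (sub_nonneg.2 hle)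
  have hxs : x + s ≠ 0 := by positivity
  have key : γ ^ 2 * (x - s) * (x + s) = 1 := by
    have : (x - s) * (x + s) = (γ ^ 2)⁻¹ := by
      have : (x - s) * (x + s) = x ^ 2 - s ^ 2 := by ring
      rw [this, hssq]; ring
    rw [mul_assoc, this, mul_inv_cancel₀ (by positivity)]
  have : γ ^ 2 * (x - s) = 1 / (x + s) := by
    field_simp
    linarith [key]
  exact this.symm

lemma sorted_pos {n : ℕ} (L : Matrix (Fin n) (Fin n) ℝ) (hL : IsConnLaplacian L)
    (i : Fin n) (hi : 1 ≤ (i : ℕ)) : 0 < sortedEigenvalues L i := by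
  obtain ⟨hpsd, hone, hker⟩ := hL
  have hA : L.IsHermitian := hpsd.1
  rw [sortedEigenvalues, dif_pos hA]
  -- at most one zero eigenvalue
  have hzero : ∀ j k : Fin n, hA.eigenvalues j = 0 → hA.eigenvalues k = 0 → j = k := by
    intro j k hj hk
    by_contra hjk
    have hvj := hA.mulVec_eigenvectorBasis j
    have hvk := hA.mulVec_eigenvectorBasis k
    rw [hj, zero_smul] at hvj
    rw [hk, zero_smul] at hvk
    obtain ⟨cj, hcj⟩ := hker _ hvj
    obtain ⟨ck, hck⟩ := hker _ hvk
    have hcj' : ∀ t, hA.eigenvectorBasis j t = cj := fun t => by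
      have := congrFun hcj t; simpa using this
    have hck' : ∀ t, hA.eigenvectorBasis k t = ck := fun t => by
      have := congrFun hck t; simpa using this
    have hnj : cj ≠ 0 := by
      intro h
      apply hA.eigenvectorBasis.orthonormal.ne_zero j
      ext t
      simp [hcj' t, h]
    have hnk : ck ≠ 0 := by
      intro h
      apply hA.eigenvectorBasis.orthonormal.ne_zero k
      ext t
      simp [hck' t, h]
    have horth : inner ℝ (hA.eigenvectorBasis j) (hA.eigenvectorBasis k) = (0 : ℝ) :=
      hA.eigenvectorBasis.orthonormal.2 hjk
    rw [PiLp.inner_apply] at horth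
    simp only [RCLike.inner_apply, conj_trivial] at horth
    have hsum : ∑ t : Fin n, hA.eigenvectorBasis j t * hA.eigenvectorBasis k t
        = (n : ℝ) * (cj * ck) := by
      simp [hcj', hck', Finset.sum_const, mul_comm]
    rw [Finset.sum_congr rfl (fun t _ => mul_comm (hA.eigenvectorBasis k t) (hA.eigenvectorBasis j t)), hsum] at horth
    have hn : (0 : ℕ) < n := i.pos
    have hn' : (n : ℝ) ≠ 0 := Nat.cast_ne_zero.2 hn.ne'
    exact hnj (by
      rcases mul_eq_zero.1 ((mul_eq_zero.1 horth).resolve_left hn') with h | h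
      · exact h
      · exact absurd h hnk)
  have hmono := Tuple.monotone_sort hA.eigenvalues
  have hnn : ∀ j, 0 ≤ hA.eigenvalues j := fun j => hpsd.eigenvalues_nonneg j
  rcases lt_or_eq_of_le (hnn (Tuple.sort hA.eigenvalues i)) with h | h
  · exact h
  · exfalso
    have hn : (0 : ℕ) < n := i.pos
    set z : Fin n := ⟨0, hn⟩ with hz
    have h0 : z ≤ i := Fin.le_def.2 (Nat.zero_le _)
    have hle0 : hA.eigenvalues (Tuple.sort hA.eigenvalues z) ≤
        hA.eigenvalues (Tuple.sort hA.eigenvalues i) := hmono h0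
    have h00 : hA.eigenvalues (Tuple.sort hA.eigenvalues z) = 0 :=
      le_antisymm (h ▸ hle0) (hnn _)
    have heq := hzero _ _ h00 h.symm
    have hzi : z = i := (Tuple.sort hA.eigenvalues).injective heq
    have : (i : ℕ) = 0 := by rw [← hzi]
    omega

/-- As γ → ∞, γ²(x − √(x² − γ⁻²)) → 1/(2x) for every x > 0; consequently the γ-entropy
of a consensus network converges to half the sum of inverse nonzero Laplacian eigenvalues
(the squared H₂-norm). -/
theorem gamma_entropy_tendsto_H2 {n : ℕ} :
    (∀ x : ℝ, 0 < x →
      Tendsto (fun γ : ℝ => γ ^ 2 * (x - Real.sqrt (x ^ 2 - (γ ^ 2)⁻¹)))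
        atTop (nhds (1 / (2 * x)))) ∧
    ∀ L : Matrix (Fin n) (Fin n) ℝ, IsConnLaplacian L →
      Tendsto (fun γ : ℝ =>
          ∑ i ∈ Finset.univ.filter (fun i : Fin n => 1 ≤ (i : ℕ)),
            γ ^ 2 * (sortedEigenvalues L i -
              Real.sqrt ((sortedEigenvalues L i) ^ 2 - (γ ^ 2)⁻¹)))
        atTop
        (nhds ((1 / 2) *
          ∑ i ∈ Finset.univ.filter (fun i : Fin n => 1 ≤ (i : ℕ)),
            (sortedEigenvalues L i)⁻¹)) := by
  refine ⟨aux_limit, fun L hL => ?_⟩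
  have hsum : (1 / 2 : ℝ) * ∑ i ∈ Finset.univ.filter (fun i : Fin n => 1 ≤ (i : ℕ)),
      (sortedEigenvalues L i)⁻¹
      = ∑ i ∈ Finset.univ.filter (fun i : Fin n => 1 ≤ (i : ℕ)),
        (1 / (2 * sortedEigenvalues L i)) := by
    rw [Finset.mul_sum]
    refine Finset.sum_congr rfl fun i _ => ?_
    rw [one_div, one_div, mul_inv]
  rw [hsum]
  refine tendsto_finset_sum _ fun i hi => ?_
  exact aux_limit _ (sorted_pos L hL i (by simpa using hi))
end
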